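/- arXiv:1403.0126 — 11 statements merged into one kernel-verified Lean document; each statement's English description precedes it below -/
import Mathlib

section
/- Let q be a prime power, let E be an elliptic curve defined over F_q, and let T_2 be the trace zero subgroup of E(F_{q^2}). Then T_2 = {(X,Y) ∈ E(F_{q^2}) : X ∈ F_q and Y ∉ F_q} ∪ E[2](F_q), where E[2](F_q) denotes the set of F_q-rational points P of E with 2P = O. -/
open WeierstrassCurve.Affine

lemma my_mem_range_iff_pow {Fq K : Type*} [Field Fq] [Fintype Fq] [Field K] [Algebra Fq K]
    (x : K) : x ∈ Set.range (algebraMap Fq K) ↔ x ^ Fintype.card Fq = x := by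
  classical
  constructor
  · rintro ⟨a, rfl⟩
    rw [← map_pow, FiniteField.pow_card]
  · intro hx
    set q := Fintype.card Fq with hq
    have hq1 : 1 < q := Fintype.one_lt_card
    set f : Polynomial K := Polynomial.X ^ q - Polynomial.X with hf
    have hlt : (Polynomial.X : Polynomial K).natDegree < (Polynomial.X ^ q : Polynomial K).natDegree := by
      rw [Polynomial.natDegree_X_pow, Polynomial.natDegree_X]; omega
    have hdeg : f.natDegree = q := by
      rw [hf, Polynomial.natDegree_sub_eq_left_of_natDegree_lt hlt, Polynomial.natDegree_X_pow]
    have hf0 : f ≠ 0 := fun h => by simp [h, hq] at hdeg; omega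
    set s : Finset K := (Finset.univ : Finset Fq).image (algebraMap Fq K) with hs
    have hscard : s.card = q := by
      rw [hs, Finset.card_image_of_injective _ (algebraMap Fq K).injective, Finset.card_univ]
    have hsub : s ⊆ f.roots.toFinset := by
      intro z hz
      rw [hs, Finset.mem_image] at hz
      obtain ⟨a, -, rfl⟩ := hz
      rw [Multiset.mem_toFinset, Polynomial.mem_roots hf0]
      simp only [hf, Polynomial.IsRoot, Polynomial.eval_sub, Polynomial.eval_pow,
        Polynomial.eval_X, ← map_pow, hq, FiniteField.pow_card, sub_self]
    have hle : f.roots.toFinset.card ≤ q := by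
      calc f.roots.toFinset.card ≤ Multiset.card f.roots := f.roots.toFinset_card_le
        _ ≤ f.natDegree := f.card_roots'
        _ = q := hdeg
    have heq : s = f.roots.toFinset :=
      Finset.eq_of_subset_of_card_le hsub (by rw [hscard]; exact hle)
    have hxr : x ∈ f.roots.toFinset := by
      rw [Multiset.mem_toFinset, Polynomial.mem_roots hf0]
      simp [hf, hx]
    rw [← heq, hs, Finset.mem_image] at hxr
    obtain ⟨a, -, rfl⟩ := hxr
    exact ⟨a, rfl⟩

open Classical in
/-- Let `E` be an elliptic curve over `F_q` and `T_2` the trace zero subgroup of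
`E(F_{q²})`, i.e. the kernel of `P ↦ P + φ(P)` where `φ` is the `q`-power Frobenius. Then
`T_2 = {(X,Y) ∈ E(F_{q²}) : X ∈ F_q, Y ∉ F_q} ∪ E[2](F_q)`, where `E[2](F_q)` is the set of
`F_q`-rational points `P` with `2P = O`. -/
theorem traceZero_quadratic_eq
    {Fq K : Type*} [Field Fq] [Fintype Fq] [Field K] [Fintype K] [Algebra Fq K]
    (hcard : Fintype.card K = Fintype.card Fq ^ 2)
    (W : WeierstrassCurve.Affine Fq) (hΔ : W.Δ ≠ 0)
    (φ : K →ₐ[Fq] K) (hφ : ∀ x : K, φ x = x ^ Fintype.card Fq)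
    (P : (W⁄K).Point) :
    P + Point.map (W' := W) φ P = 0 ↔
      ((∃ (X Y : K) (h : (W.baseChange K).toAffine.Nonsingular X Y),
          P = Point.some _ _ h ∧ X ∈ Set.range (algebraMap Fq K) ∧
            Y ∉ Set.range (algebraMap Fq K)) ∨
        ((∃ P₀ : (W⁄Fq).Point, Point.baseChange (W' := W) Fq K P₀ = P) ∧ 2 • P = 0)) := by
  have key : ∀ x : K, x ∈ Set.range (algebraMap Fq K) ↔ φ x = x := fun x => by
    rw [hφ]; exact my_mem_range_iff_pow x
  rcases P with _ | @⟨x, y, h⟩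
  · constructor
    · intro _
      right
      exact ⟨⟨0, map_zero _⟩, smul_zero 2⟩
    · intro _
      show (0 : (W⁄K).Point) + Point.map (W' := W) φ 0 = 0
      rw [map_zero, add_zero]
  · have hm : Point.map (W' := W) φ (Point.some _ _ h) =
        Point.some _ _ ((W.baseChange_nonsingular φ.injective x y).mpr h) := Point.map_some (W' := W) φ h
    constructor
    · intro hP
      rw [hm, add_eq_zero_iff_eq_neg, Point.neg_some, Point.some.injEq] at hP
      obtain ⟨hx, hy⟩ := hP
      -- hx : x = φ x, hy : y = negY (φ x) (φ y)
      have hxr : x ∈ Set.range (algebraMap Fq K) := (key x).mpr hx.symm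
      by_cases hyr : y ∈ Set.range (algebraMap Fq K)
      · right
        have hφy : φ y = y := (key y).mp hyr
        rw [← hx, hφy] at hy
        have hy2 : y = (W.baseChange K).toAffine.negY x y := hy
        obtain ⟨x₀, hx₀⟩ := hxr
        obtain ⟨y₀, hy₀⟩ := hyr
        have h₀ : (W.baseChange Fq).toAffine.Nonsingular x₀ y₀ := by
          rw [← W.baseChange_nonsingular (Algebra.ofId Fq K).injective x₀ y₀]
          show (W.baseChange K).toAffine.Nonsingular (algebraMap Fq K x₀) (algebraMap Fq K y₀)
          rw [hx₀, hy₀]; exact h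
        constructor
        · refine ⟨Point.some _ _ h₀, ?_⟩
          show Point.some _ _ _ = Point.some _ _ h
          rw [Point.some.injEq]
          exact ⟨hx₀, hy₀⟩
        · rw [two_nsmul, add_eq_zero_iff_eq_neg, Point.neg_some, Point.some.injEq]
          exact ⟨rfl, hy2⟩
      · left
        exact ⟨x, y, h, rfl, hxr, hyr⟩
    · rintro (⟨X, Y, h', hP, hX, hY⟩ | ⟨⟨P₀, hP₀⟩, h2⟩)
      · rw [Point.some.injEq] at hP
        obtain ⟨hx1, hy1⟩ := hP
        subst hx1; subst hy1
        have hφx : φ x = x := (key x).mp hX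
        have hE : (W.baseChange K).toAffine.Equation x y := h.1
        have hE' : (W.baseChange K).toAffine.Equation x (φ y) := by
          have := (W.baseChange_equation (f := φ) φ.injective x y).mpr hE
          rwa [hφx] at this
        have := Y_eq_of_X_eq hE hE' rfl
        rcases this with heq | heq
        · exact absurd ((key y).mpr heq.symm) hY
        · rw [hm, add_eq_zero_iff_eq_neg, Point.neg_some, Point.some.injEq]
          rw [hφx]
          exact ⟨rfl, heq⟩
      · have : Point.map (W' := W) φ (Point.some _ _ h) = Point.some _ _ h := by
          rw [← hP₀, Point.map_baseChange]
        rw [this, ← two_nsmul]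
        exact h2
end

section
/- Let E be an elliptic curve over F_q, let n ≥ 1 and let k be an integer with 0 ≤ 2k ≤ n. Let Q ∈ E(F_q) satisfy (n−2k)Q = O, and let R ∈ E(F_{q^n}) satisfy 2R = O and R + φ(R) + … + φ^{n-1}(R) = O. Then the point P = Q + R satisfies P + φ(P) + … + φ^{n-2k-1}(P) + φ^{n-2k}(P) − φ^{n-2k+1}(P) + … + (−1)^{2k-1} φ^{n-1}(P) = O, i.e. the sum of the first n−2k Frobenius conjugates of P plus the alternating-sign sum of the remaining 2k Frobenius conjugates (starting with sign +) equals O. -/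
open WeierstrassCurve.Affine

open Classical in
/-- Let `E` be an elliptic curve over `F_q`, `n ≥ 1`, and `k` with `0 ≤ 2k ≤ n`.
Let `Q ∈ E(F_q)` (viewed in `E(F_{q^n})`, so `φ(Q) = Q`) satisfy `(n−2k)Q = O`, and let
`R ∈ E(F_{q^n})` satisfy `2R = O` and `R + φ(R) + … + φ^{n-1}(R) = O`. Then `P = Q + R` satisfies
`P + φ(P) + … + φ^{n-2k-1}(P) + φ^{n-2k}(P) − φ^{n-2k+1}(P) + … + (−1)^{2k-1} φ^{n-1}(P) = O`. -/
theorem sum_frobenius_conjugates_alternating_eq_zero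
    {Fq K : Type*} [Field Fq] [Fintype Fq] [Field K] [Fintype K] [Algebra Fq K]
    {n : ℕ} (hn : 1 ≤ n) (hcard : Fintype.card K = Fintype.card Fq ^ n)
    (W : WeierstrassCurve.Affine Fq) (hΔ : W.Δ ≠ 0)
    (φ : K →ₐ[Fq] K) (hφ : ∀ x : K, φ x = x ^ Fintype.card Fq)
    (k : ℕ) (hk : 2 * k ≤ n)
    (Q R : (W⁄K).Point)
    (hQrat : Point.map (W' := W) φ Q = Q)
    (hQtor : (n - 2 * k) • Q = 0)
    (hR2 : 2 • R = 0)
    (hRtr : ∑ i ∈ Finset.range n, (⇑(Point.map (W' := W) φ))^[i] R = 0) :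
    ∑ i ∈ Finset.range (n - 2 * k), (⇑(Point.map (W' := W) φ))^[i] (Q + R) +
      ∑ i ∈ Finset.range (2 * k),
        (-1 : ℤ) ^ i • (⇑(Point.map (W' := W) φ))^[n - 2 * k + i] (Q + R) = 0 := by
  set f := Point.map (W' := W) φ with hf
  have hfit : ∀ (i : ℕ) (P : (W⁄K).Point), (⇑f)^[i] P = Q + (⇑f)^[i] R ∨ True := fun _ _ => Or.inr trivial
  have hQfix : ∀ i : ℕ, (⇑f)^[i] Q = Q := by
    intro i
    induction i with
    | zero => rfl
    | succ i ih => rw [Function.iterate_succ_apply', ih, hQrat]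
  have hiter : ∀ i : ℕ, (⇑f)^[i] (Q + R) = Q + (⇑f)^[i] R := by
    intro i
    induction i with
    | zero => rfl
    | succ i ih =>
      rw [Function.iterate_succ_apply', ih, map_add, hQrat, Function.iterate_succ_apply']
  have hR2' : ∀ i : ℕ, (⇑f)^[i] R + (⇑f)^[i] R = 0 := by
    intro i
    have : (⇑f)^[i] (2 • R) = 0 := by rw [hR2]; simp [Function.iterate_fixed]
    rw [two_smul] at this
    have hadd : ∀ j : ℕ, (⇑f)^[j] (R + R) = (⇑f)^[j] R + (⇑f)^[j] R := by
      intro j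
      induction j with
      | zero => rfl
      | succ j ih => simp [Function.iterate_succ_apply', ih, map_add]
    rwa [hadd] at this
  have hsign : ∀ (i : ℕ) (j : ℕ), ((-1 : ℤ) ^ i) • (⇑f)^[j] R = (⇑f)^[j] R := by
    intro i j
    rcases Nat.even_or_odd i with ⟨c, hc⟩ | ⟨c, hc⟩
    · rw [(Even.neg_one_pow ⟨c, hc⟩ : ((-1:ℤ))^i = 1), one_smul]
    · rw [(Odd.neg_one_pow ⟨c, hc⟩ : ((-1:ℤ))^i = -1), neg_smul, one_smul,
        neg_eq_of_add_eq_zero_left (hR2' j)]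
  have hQalt : ∀ m : ℕ, ∑ i ∈ Finset.range (2 * m), ((-1 : ℤ) ^ i) • Q = 0 := by
    intro m
    induction m with
    | zero => simp
    | succ m ih =>
      rw [Nat.mul_succ, Finset.sum_range_succ, Finset.sum_range_succ, ih]
      simp [pow_succ, pow_mul]
  calc
    ∑ i ∈ Finset.range (n - 2 * k), (⇑f)^[i] (Q + R) +
        ∑ i ∈ Finset.range (2 * k), (-1 : ℤ) ^ i • (⇑f)^[n - 2 * k + i] (Q + R)
      = (∑ i ∈ Finset.range (n - 2 * k), (Q + (⇑f)^[i] R)) +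
        ∑ i ∈ Finset.range (2 * k),
          (((-1 : ℤ) ^ i) • Q + ((-1 : ℤ) ^ i) • (⇑f)^[n - 2 * k + i] R) := by
        simp only [hiter, smul_add]
    _ = ((n - 2 * k) • Q + ∑ i ∈ Finset.range (n - 2 * k), (⇑f)^[i] R) +
        ((∑ i ∈ Finset.range (2 * k), ((-1 : ℤ) ^ i) • Q) +
          ∑ i ∈ Finset.range (2 * k), (⇑f)^[n - 2 * k + i] R) := by
        rw [Finset.sum_add_distrib, Finset.sum_const, Finset.card_range,
          Finset.sum_add_distrib]
        simp only [hsign]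
    _ = ∑ i ∈ Finset.range (n - 2 * k), (⇑f)^[i] R +
          ∑ i ∈ Finset.range (2 * k), (⇑f)^[n - 2 * k + i] R := by
        rw [hQtor, hQalt k, zero_add, zero_add]
    _ = ∑ i ∈ Finset.range (n - 2 * k + 2 * k), (⇑f)^[i] R := by
        rw [Finset.sum_range_add]
    _ = 0 := by rw [Nat.sub_add_cancel hk, hRtr]
end

section
/- Let F_q be a finite field of characteristic different from 2 and 3, let E : y² = x³ + Ax + B be a smooth elliptic curve over F_q, and let T_3 be the trace zero subgroup of E(F_{q^3}). Then T_3 = { (X,Y) ∈ E(F_{q^3}) : f_3(X, X^q, X^{q^2}) = 0 } ∪ {O}, where f_3 is the third Semaev polynomial of E. -/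
open WeierstrassCurve.Affine

/-- The third Semaev polynomial of the elliptic curve `y² = x³ + Ax + B`. -/
def semaev3 {R : Type*} [CommRing R] (A B z₁ z₂ z₃ : R) : R :=
  (z₁ - z₂) ^ 2 * z₃ ^ 2 - 2 * ((z₁ + z₂) * (z₁ * z₂ + A) + 2 * B) * z₃ +
    (z₁ * z₂ - A) ^ 2 - 4 * B * (z₁ + z₂)

namespace Semaev3Aux

variable {K : Type*} [Field K] [DecidableEq K]

lemma semaev3_factor (A B x₁ x₂ y₁ y₂ z : K)
    (e₁ : y₁ ^ 2 = x₁ ^ 3 + A * x₁ + B) (e₂ : y₂ ^ 2 = x₂ ^ 3 + A * x₂ + B) :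
    (x₁ - x₂) ^ 2 * semaev3 A B x₁ x₂ z =
      ((x₁ - x₂) ^ 2 * (z + x₁ + x₂) - (y₁ - y₂) ^ 2) *
        ((x₁ - x₂) ^ 2 * (z + x₁ + x₂) - (y₁ + y₂) ^ 2) := by
  simp only [semaev3]
  linear_combination
    (-B + 2 * y₂ ^ 2 - y₁ ^ 2 + 2 * x₂ ^ 2 * z + 2 * x₂ ^ 3 - x₁ * A - 4 * x₁ * x₂ * z
      - 2 * x₁ * x₂ ^ 2 + 2 * x₁ ^ 2 * z - 2 * x₁ ^ 2 * x₂ + x₁ ^ 3) * e₁ +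
    (B - y₂ ^ 2 - x₂ * A + 2 * x₂ ^ 2 * z + x₂ ^ 3 + 2 * x₁ * A - 4 * x₁ * x₂ * z
      - 2 * x₁ * x₂ ^ 2 + 2 * x₁ ^ 2 * z - 2 * x₁ ^ 2 * x₂ + 4 * x₁ ^ 3) * e₂

lemma semaev3_tangent (A B x₁ y₁ z : K) (e₁ : y₁ ^ 2 = x₁ ^ 3 + A * x₁ + B) :
    semaev3 A B x₁ x₁ z = (3 * x₁ ^ 2 + A) ^ 2 - 8 * x₁ * y₁ ^ 2 - 4 * y₁ ^ 2 * z := by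
  simp only [semaev3]
  linear_combination (4 * z + 8 * x₁) * e₁

variable {C : WeierstrassCurve.Affine K} {A B : K}

lemma negY_eq (h1 : C.a₁ = 0) (h3 : C.a₃ = 0) (x y : K) : C.negY x y = -y := by
  simp [WeierstrassCurve.Affine.negY, h1, h3]

lemma eqn_of_nonsingular (h1 : C.a₁ = 0) (h2 : C.a₂ = 0) (h3 : C.a₃ = 0)
    (h4 : C.a₄ = A) (h6 : C.a₆ = B) {x y : K} (h : C.Nonsingular x y) :
    y ^ 2 = x ^ 3 + A * x + B := by
  have := (C.equation_iff x y).mp h.1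
  rw [h1, h2, h3, h4, h6] at this
  linear_combination this

lemma some_eq_some {x y x' y' : K} (hx : x = x') (hy : y = y')
    (h : C.Nonsingular x y) (h' : C.Nonsingular x' y') :
    Point.some _ _ h = Point.some _ _ h' := by
  subst hx; subst hy; rfl

lemma eq_or_eq_neg {x y y' : K} (h : C.Nonsingular x y) (h' : C.Nonsingular x y') :
    Point.some _ _ h = Point.some _ _ h' ∨ Point.some _ _ h = -Point.some _ _ h' := by
  rcases Y_eq_of_X_eq h.1 h'.1 rfl with hy | hy
  · exact Or.inl (some_eq_some rfl hy h h')
  · right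
    rw [Point.neg_some]
    exact some_eq_some rfl hy h _

lemma sum_eq_zero_semaev (h1 : C.a₁ = 0) (h2 : C.a₂ = 0) (h3 : C.a₃ = 0)
    (h4 : C.a₄ = A) (h6 : C.a₆ = B) (h2K : (2 : K) ≠ 0) {x₁ y₁ x₂ y₂ x₃ y₃ : K}
    (H₁ : C.Nonsingular x₁ y₁) (H₂ : C.Nonsingular x₂ y₂) (H₃ : C.Nonsingular x₃ y₃)
    (hsum : Point.some _ _ H₁ + Point.some _ _ H₂ + Point.some _ _ H₃ = 0) :
    semaev3 A B x₁ x₂ x₃ = 0 := by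
  have h4K : (4 : K) ≠ 0 := by
    rw [show (4 : K) = 2 * 2 by norm_num]; exact mul_ne_zero h2K h2K
  have e₁ := eqn_of_nonsingular h1 h2 h3 h4 h6 H₁
  have e₂ := eqn_of_nonsingular h1 h2 h3 h4 h6 H₂
  have hne : Point.some _ _ H₁ + Point.some _ _ H₂ = -Point.some _ _ H₃ :=
    eq_neg_of_add_eq_zero_left hsum
  by_cases hx : x₁ = x₂
  · by_cases hy : y₁ = C.negY x₂ y₂
    · rw [Point.add_of_Y_eq hx hy] at hne
      exact absurd (neg_eq_zero.mp hne.symm) (Point.some_ne_zero _)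
    · rw [Point.add_some (fun h => hy h.2), Point.neg_some] at hne
      obtain ⟨hx3, -⟩ := Point.some.inj hne
      have hy12 : y₁ = y₂ := Y_eq_of_Y_ne H₁.1 H₂.1 hx hy
      rw [negY_eq h1 h3] at hy
      have hy0 : y₁ ≠ 0 := by
        intro h0; apply hy; rw [h0, hy12.symm, h0, neg_zero]
      have hslope : C.slope x₁ x₂ y₁ y₂ = (3 * x₁ ^ 2 + A) / (2 * y₁) := by
        rw [slope_of_Y_ne hx (by rw [negY_eq h1 h3]; exact hy), negY_eq h1 h3, h1, h2, h4]
        ring_nf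
      rw [← hx] at e₂ ⊢
      rw [WeierstrassCurve.Affine.addX, hslope, h1, h2, ← hx] at hx3
      have hx3' : x₃ = ((3 * x₁ ^ 2 + A) ^ 2 - 8 * x₁ * y₁ ^ 2) / (4 * y₁ ^ 2) := by
        rw [← hx3]; field_simp; ring
      rw [semaev3_tangent A B x₁ y₁ x₃ e₁, hx3']
      field_simp
      ring
  · rw [Point.add_of_X_ne hx, Point.neg_some] at hne
    obtain ⟨hx3, -⟩ := Point.some.inj hne
    have hu : x₁ - x₂ ≠ 0 := sub_ne_zero.mpr hx
    have key := semaev3_factor A B x₁ x₂ y₁ y₂ x₃ e₁ e₂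
    rw [WeierstrassCurve.Affine.addX, slope_of_X_ne hx, h1, h2] at hx3
    have hfac : (x₁ - x₂) ^ 2 * (x₃ + x₁ + x₂) - (y₁ - y₂) ^ 2 = 0 := by
      rw [← hx3]
      field_simp
      ring
    rw [hfac, zero_mul] at key
    exact (mul_eq_zero.mp key).resolve_left (pow_ne_zero 2 hu)

lemma semaev_imp_sum (h1 : C.a₁ = 0) (h2 : C.a₂ = 0) (h3 : C.a₃ = 0)
    (h4 : C.a₄ = A) (h6 : C.a₆ = B) (h2K : (2 : K) ≠ 0) {x₁ y₁ x₂ y₂ x₃ y₃ : K}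
    (H₁ : C.Nonsingular x₁ y₁) (H₂ : C.Nonsingular x₂ y₂) (H₃ : C.Nonsingular x₃ y₃)
    (hs : semaev3 A B x₁ x₂ x₃ = 0) :
    Point.some _ _ H₁ + Point.some _ _ H₂ + Point.some _ _ H₃ = 0 ∨
    Point.some _ _ H₁ + Point.some _ _ H₂ - Point.some _ _ H₃ = 0 ∨
    Point.some _ _ H₁ - Point.some _ _ H₂ + Point.some _ _ H₃ = 0 ∨
    Point.some _ _ H₁ - Point.some _ _ H₂ - Point.some _ _ H₃ = 0 := by
  have h4K : (4 : K) ≠ 0 := by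
    rw [show (4 : K) = 2 * 2 by norm_num]; exact mul_ne_zero h2K h2K
  have e₁ := eqn_of_nonsingular h1 h2 h3 h4 h6 H₁
  have e₂ := eqn_of_nonsingular h1 h2 h3 h4 h6 H₂
  by_cases hx : x₁ = x₂
  · have hy12 : y₁ = y₂ ∨ y₁ = -y₂ := by
      have h0 : (y₁ - y₂) * (y₁ + y₂) = 0 := by
        linear_combination e₁ - e₂ + (x₁ ^ 2 + x₁ * x₂ + x₂ ^ 2 + A) * hx
      rcases mul_eq_zero.mp h0 with h | h
      · exact Or.inl (sub_eq_zero.mp h)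
      · exact Or.inr (eq_neg_of_add_eq_zero_left h)
    rw [← hx] at hs
    rw [semaev3_tangent A B x₁ y₁ x₃ e₁] at hs
    by_cases hy0 : y₁ = 0
    · exfalso
      have hA3 : 3 * x₁ ^ 2 + A ≠ 0 := by
        rcases ((C.nonsingular_iff' x₁ y₁).mp H₁).2 with hX | hY
        · rw [h1, h2, h4, hy0] at hX
          intro hc; apply hX; linear_combination -hc
        · rw [h1, h3, hy0] at hY; exact absurd (by ring) hY
      rw [hy0] at hs
      apply hA3
      exact sq_eq_zero_iff.mp (by linear_combination hs)
    · have hyne : y₁ ≠ C.negY x₁ y₁ := by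
        rw [negY_eq h1 h3]
        intro hc
        apply hy0
        have h20 : 2 * y₁ = 0 := by linear_combination hc
        rcases mul_eq_zero.mp h20 with h | h
        · exact absurd h h2K
        · exact h
      have hslope : C.slope x₁ x₁ y₁ y₁ = (3 * x₁ ^ 2 + A) / (2 * y₁) := by
        rw [slope_of_Y_ne rfl hyne, negY_eq h1 h3, h1, h2, h4]; ring_nf
      have hx3' : x₃ = ((3 * x₁ ^ 2 + A) ^ 2 - 8 * x₁ * y₁ ^ 2) / (4 * y₁ ^ 2) := by
        field_simp
        linear_combination -hs
      have hX : C.addX x₁ x₁ (C.slope x₁ x₁ y₁ y₁) = x₃ := by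
        rw [WeierstrassCurve.Affine.addX, hslope, h1, h2, hx3']
        field_simp
        ring
      have Hq' : C.Nonsingular x₃ (C.addY x₁ x₁ y₁ (C.slope x₁ x₁ y₁ y₁)) := by
        rw [← hX]; exact nonsingular_add H₁ H₁ fun h => hyne h.2
      have h2P : Point.some _ _ H₁ + Point.some _ _ H₁ = Point.some _ _ H₃ ∨
          Point.some _ _ H₁ + Point.some _ _ H₁ = -Point.some _ _ H₃ := by
        rcases eq_or_eq_neg Hq' H₃ with h | h
        · left; rw [Point.add_self_of_Y_ne hyne, ← h]; exact some_eq_some hX rfl _ _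
        · right; rw [Point.add_self_of_Y_ne hyne, ← h]; exact some_eq_some hX rfl _ _
      rcases hy12 with hy | hy
      · have hP2 : Point.some _ _ H₂ = Point.some _ _ H₁ := some_eq_some hx.symm hy.symm H₂ H₁
        rcases h2P with h | h
        · exact Or.inr (Or.inl (by rw [hP2, h, sub_self]))
        · exact Or.inl (by rw [hP2, h, neg_add_cancel])
      · have hsub : Point.some _ _ H₁ - Point.some _ _ H₂ = Point.some _ _ H₁ + Point.some _ _ H₁ := by
          have hP2 : Point.some _ _ H₂ = -Point.some _ _ H₁ := by
            rw [Point.neg_some]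
            exact some_eq_some hx.symm (by rw [negY_eq h1 h3]; linear_combination hy) H₂ _
          rw [hP2, sub_neg_eq_add]
        rcases h2P with h | h
        · exact Or.inr (Or.inr (Or.inr (by rw [hsub, h, sub_self])))
        · exact Or.inr (Or.inr (Or.inl (by rw [hsub, h, neg_add_cancel])))
  · have hu : x₁ - x₂ ≠ 0 := sub_ne_zero.mpr hx
    have key := semaev3_factor A B x₁ x₂ y₁ y₂ x₃ e₁ e₂
    rw [hs, mul_zero] at key
    rcases mul_eq_zero.mp key.symm with hf | hf
    · have hx3' : x₃ = (y₁ - y₂) ^ 2 / (x₁ - x₂) ^ 2 - x₁ - x₂ := by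
        field_simp
        linear_combination hf
      have hX : C.addX x₁ x₂ (C.slope x₁ x₂ y₁ y₂) = x₃ := by
        rw [WeierstrassCurve.Affine.addX, slope_of_X_ne hx, h1, h2, hx3']
        field_simp
        ring
      have Hq' : C.Nonsingular x₃ (C.addY x₁ x₂ y₁ (C.slope x₁ x₂ y₁ y₂)) := by
        rw [← hX]; exact nonsingular_add H₁ H₂ fun h => absurd h.1 hx
      rcases eq_or_eq_neg Hq' H₃ with h | h
      · exact Or.inr (Or.inl (by
          rw [Point.add_of_X_ne hx, some_eq_some hX rfl _ Hq', h, sub_self]))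
      · exact Or.inl (by
          rw [Point.add_of_X_ne hx, some_eq_some hX rfl _ Hq', h, neg_add_cancel])
    · have hx3' : x₃ = (y₁ + y₂) ^ 2 / (x₁ - x₂) ^ 2 - x₁ - x₂ := by
        field_simp
        linear_combination hf
      have hX : C.addX x₁ x₂ (C.slope x₁ x₂ y₁ (C.negY x₂ y₂)) = x₃ := by
        rw [WeierstrassCurve.Affine.addX, slope_of_X_ne hx, negY_eq h1 h3, h1, h2, hx3']
        field_simp
        ring
      have Hq' : C.Nonsingular x₃ (C.addY x₁ x₂ y₁ (C.slope x₁ x₂ y₁ (C.negY x₂ y₂))) := by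
        rw [← hX]; exact nonsingular_add H₁ ((nonsingular_neg ..).mpr H₂) fun h => absurd h.1 hx
      have hsub : Point.some _ _ H₁ - Point.some _ _ H₂ =
          Point.some _ _ (nonsingular_add H₁ ((nonsingular_neg ..).mpr H₂) fun h => absurd h.1 hx) := by
        rw [sub_eq_add_neg, Point.neg_some]
        exact Point.add_of_X_ne hx
      rcases eq_or_eq_neg Hq' H₃ with h | h
      · exact Or.inr (Or.inr (Or.inr (by
          rw [hsub, some_eq_some hX rfl _ Hq', h, sub_self])))
      · exact Or.inr (Or.inr (Or.inl (by
          rw [hsub, some_eq_some hX rfl _ Hq', h, neg_add_cancel])))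

end Semaev3Aux

open scoped Classical in
/-- Let `F_q` have characteristic `≠ 2, 3`, let `E : y² = x³ + Ax + B` be a
smooth elliptic curve over `F_q`, and let `T_3` be the trace zero subgroup of `E(F_{q³})`. Then
`T_3 = {(X,Y) ∈ E(F_{q³}) : f_3(X, X^q, X^{q²}) = 0} ∪ {O}`. -/
theorem traceZero_cubic_eq_semaev3_locus
    {Fq K : Type*} [Field Fq] [Fintype Fq] [Field K] [Fintype K] [Algebra Fq K]
    (hcard : Fintype.card K = Fintype.card Fq ^ 3)
    (hchar2 : ringChar Fq ≠ 2) (hchar3 : ringChar Fq ≠ 3)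
    (A B : Fq) (hAB : 4 * A ^ 3 + 27 * B ^ 2 ≠ 0)
    (W : WeierstrassCurve.Affine Fq) (hW : W = ⟨0, 0, 0, A, B⟩)
    (φ : K →ₐ[Fq] K) (hφ : ∀ x : K, φ x = x ^ Fintype.card Fq)
    (P : (W⁄K).Point) :
    P + Point.map (W' := W) φ P + Point.map (W' := W) φ (Point.map (W' := W) φ P) = 0 ↔
      (P = 0 ∨
        ∃ (X Y : K) (h : (W.baseChange K).toAffine.Nonsingular X Y),
          P = Point.some _ _ h ∧
            semaev3 (algebraMap Fq K A) (algebraMap Fq K B) X (X ^ Fintype.card Fq)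
              (X ^ Fintype.card Fq ^ 2) = 0) := by
  have h2Fq : (2 : Fq) ≠ 0 := by
    intro h20
    have hdvd : ringChar Fq ∣ 2 := (ringChar.spec Fq 2).mp (by exact_mod_cast h20)
    rcases (Nat.prime_two.eq_one_or_self_of_dvd _ hdvd) with hone | htwo
    · exact absurd hone (CharP.ringChar_ne_one)
    · exact hchar2 htwo
  have hinj : Function.Injective φ := φ.toRingHom.injective
  have h2K : (2 : K) ≠ 0 := by
    have := ((algebraMap Fq K).injective).ne h2Fq
    rwa [map_ofNat, map_zero] at this
  have h1 : (W.baseChange K).toAffine.a₁ = 0 := by simp [hW]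
  have h2 : (W.baseChange K).toAffine.a₂ = 0 := by simp [hW]
  have h3 : (W.baseChange K).toAffine.a₃ = 0 := by simp [hW]
  have h4 : (W.baseChange K).toAffine.a₄ = algebraMap Fq K A := by simp [hW]
  have h6 : (W.baseChange K).toAffine.a₆ = algebraMap Fq K B := by simp [hW]
  set q := Fintype.card Fq with hq
  have hpow2 : ∀ z : K, (z ^ q) ^ q = z ^ q ^ 2 := fun z => by rw [← pow_mul, pow_two]
  have hqq : q ^ 2 * q = Fintype.card K := by rw [hcard]; ring
  rcases P with _ | @⟨X, Y, h⟩
  · simp [← Point.zero_def]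
  · have h₂ : (W.baseChange K).toAffine.Nonsingular (X ^ q) (Y ^ q) := by
      have := (W.baseChange_nonsingular hinj X Y).mpr h
      rwa [hφ X, hφ Y] at this
    have h₃ : (W.baseChange K).toAffine.Nonsingular (X ^ q ^ 2) (Y ^ q ^ 2) := by
      have := (W.baseChange_nonsingular hinj (X ^ q) (Y ^ q)).mpr h₂
      rwa [hφ (X ^ q), hφ (Y ^ q), hpow2 X, hpow2 Y] at this
    have hm1 : Point.map (W' := W) φ (Point.some _ _ h) = Point.some _ _ h₂ := by
      rw [Point.map_some]
      exact Semaev3Aux.some_eq_some (hφ X) (hφ Y) _ h₂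
    have hm2 : Point.map (W' := W) φ (Point.some _ _ h₂) = Point.some _ _ h₃ := by
      rw [Point.map_some]
      exact Semaev3Aux.some_eq_some (by rw [hφ, hpow2]) (by rw [hφ, hpow2]) _ h₃
    have hm3 : Point.map (W' := W) φ (Point.some _ _ h₃) = Point.some _ _ h := by
      rw [Point.map_some]
      refine Semaev3Aux.some_eq_some ?_ ?_ _ h
      · rw [hφ, ← pow_mul, hqq, FiniteField.pow_card]
      · rw [hφ, ← pow_mul, hqq, FiniteField.pow_card]
    rw [hm1, hm2]
    constructor
    · intro hsum
      exact Or.inr ⟨X, Y, h, rfl,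
        Semaev3Aux.sum_eq_zero_semaev h1 h2 h3 h4 h6 h2K h h₂ h₃ hsum⟩
    · rintro (h0 | ⟨X', Y', h', hP, hsem⟩)
      · exact absurd h0 (Point.some_ne_zero h)
      · obtain ⟨hx', hy'⟩ := Point.some.inj hP
        subst hx'
        subst hy'
        rcases Semaev3Aux.semaev_imp_sum h1 h2 h3 h4 h6 h2K h h₂ h₃ hsem with
          hc | hc | hc | hc
        · exact hc
        · have hc2 : Point.some _ _ h₂ + Point.some _ _ h₃ - Point.some _ _ h = 0 := by
            have := congrArg (fun Q => Point.map (W' := W) φ Q) hc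
            simpa only [map_add, map_sub, map_zero, hm1, hm2, hm3] using this
          have hc3 : Point.some _ _ h₃ + Point.some _ _ h - Point.some _ _ h₂ = 0 := by
            have := congrArg (fun Q => Point.map (W' := W) φ Q) hc2
            simpa only [map_add, map_sub, map_zero, hm1, hm2, hm3] using this
          have hsum3 : Point.some _ _ h + Point.some _ _ h₂ + Point.some _ _ h₃ =
              (Point.some _ _ h + Point.some _ _ h₂ - Point.some _ _ h₃) +
                ((Point.some _ _ h₂ + Point.some _ _ h₃ - Point.some _ _ h) +
                  (Point.some _ _ h₃ + Point.some _ _ h - Point.some _ _ h₂)) := by abel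
          rw [hsum3, hc, hc2, hc3]
          simp
        · have hc2 : Point.some _ _ h₂ - Point.some _ _ h₃ + Point.some _ _ h = 0 := by
            have := congrArg (fun Q => Point.map (W' := W) φ Q) hc
            simpa only [map_add, map_sub, map_zero, hm1, hm2, hm3] using this
          have hc3 : Point.some _ _ h₃ - Point.some _ _ h + Point.some _ _ h₂ = 0 := by
            have := congrArg (fun Q => Point.map (W' := W) φ Q) hc2
            simpa only [map_add, map_sub, map_zero, hm1, hm2, hm3] using this
          have hsum3 : Point.some _ _ h + Point.some _ _ h₂ + Point.some _ _ h₃ =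
              (Point.some _ _ h - Point.some _ _ h₂ + Point.some _ _ h₃) +
                ((Point.some _ _ h₂ - Point.some _ _ h₃ + Point.some _ _ h) +
                  (Point.some _ _ h₃ - Point.some _ _ h + Point.some _ _ h₂)) := by abel
          rw [hsum3, hc, hc2, hc3]
          simp
        · have hc2 : Point.some _ _ h₂ - Point.some _ _ h₃ - Point.some _ _ h = 0 := by
            have := congrArg (fun Q => Point.map (W' := W) φ Q) hc
            simpa only [map_add, map_sub, map_zero, hm1, hm2, hm3] using this
          have hc3 : Point.some _ _ h₃ - Point.some _ _ h - Point.some _ _ h₂ = 0 := by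
            have := congrArg (fun Q => Point.map (W' := W) φ Q) hc2
            simpa only [map_add, map_sub, map_zero, hm1, hm2, hm3] using this
          have hsum3 : Point.some _ _ h + Point.some _ _ h₂ + Point.some _ _ h₃ =
              -((Point.some _ _ h - Point.some _ _ h₂ - Point.some _ _ h₃) +
                ((Point.some _ _ h₂ - Point.some _ _ h₃ - Point.some _ _ h) +
                  (Point.some _ _ h₃ - Point.some _ _ h - Point.some _ _ h₂))) := by abel
          rw [hsum3, hc, hc2, hc3]
          simp
end

section
/- Let E be an elliptic curve over F_q and let P ∈ E(F_{q^3}). If there exist signs ε_1, ε_2 ∈ {+1, −1} such that P + ε_1 φ(P) + ε_2 φ²(P) = O, then P + φ(P) + φ²(P) = O, i.e. P lies in the trace zero subgroup T_3. In particular, if P − φ(P) + φ²(P) = O then 2P = O. -/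
open WeierstrassCurve.Affine
open scoped Classical

/-- Let `E` be an elliptic curve over `F_q` and `P ∈ E(F_{q³})`. If there are
signs `ε₁, ε₂ ∈ {+1, −1}` with `P + ε₁ φ(P) + ε₂ φ²(P) = O`, then `P + φ(P) + φ²(P) = O`, i.e.
`P ∈ T_3`. In particular, if `P − φ(P) + φ²(P) = O` then `2P = O`. -/
theorem traceZero_of_sign_sum_eq_zero_cubic
    {Fq K : Type*} [Field Fq] [Fintype Fq] [Field K] [Fintype K] [Algebra Fq K]
    (hcard : Fintype.card K = Fintype.card Fq ^ 3)
    (W : WeierstrassCurve.Affine Fq) (hΔ : W.Δ ≠ 0)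
    (φ : K →ₐ[Fq] K) (hφ : ∀ x : K, φ x = x ^ Fintype.card Fq)
    (P : (W⁄K).Point) (ε₁ ε₂ : ℤ)
    (hε₁ : ε₁ = 1 ∨ ε₁ = -1) (hε₂ : ε₂ = 1 ∨ ε₂ = -1)
    (h : P + ε₁ • Point.map (W' := W) φ P + ε₂ • Point.map (W' := W) φ (Point.map (W' := W) φ P) = 0) :
    (P + Point.map (W' := W) φ P + Point.map (W' := W) φ (Point.map (W' := W) φ P) = 0) ∧
      (P - Point.map (W' := W) φ P + Point.map (W' := W) φ (Point.map (W' := W) φ P) = 0 → 2 • P = 0) := by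
  have hid : ∀ (f : K →ₐ[Fq] K), (∀ x, f x = x) → ∀ Q : (W⁄K).Point, Point.map (W' := W) f Q = Q := by
    intro f hf Q
    cases Q with
    | zero => rfl
    | some x y hns =>
      rw [Point.map_some]
      simp only [hf]
  have hψ3 : ∀ Q : (W⁄K).Point, Point.map (W' := W) φ (Point.map (W' := W) φ (Point.map (W' := W) φ Q)) = Q := by
    intro Q
    rw [Point.map_map, Point.map_map]
    apply hid
    intro x
    simp only [AlgHom.coe_comp, Function.comp_apply, hφ]
    rw [← pow_mul, ← pow_mul,
      show Fintype.card Fq * (Fintype.card Fq * Fintype.card Fq) = Fintype.card Fq ^ 3 by ring,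
      ← hcard]
    exact FiniteField.pow_card x
  set B := Point.map (W' := W) φ P with hB
  set C := Point.map (W' := W) φ B with hC
  have hCP : Point.map (W' := W) φ C = P := hψ3 P
  have h2 : B + ε₁ • C + ε₂ • P = 0 := by
    have h2 := congrArg (Point.map (W' := W) φ) h
    simp only [map_add, map_zsmul, map_zero] at h2
    rwa [hCP, ← hC, ← hB] at h2
  have hdouble : ∀ Q : (W⁄K).Point, Q + Q = 0 → Point.map (W' := W) φ Q + Point.map (W' := W) φ Q = 0 := by
    intro Q hQ
    rw [← map_add, hQ, map_zero]
  rcases hε₁ with rfl | rfl <;> rcases hε₂ with rfl | rfl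
  · refine ⟨by simpa using h, fun hd => ?_⟩
    have hb : B + B = 0 := by
      calc B + B = (P + (1:ℤ) • B + (1:ℤ) • C) - (P - B + C) := by abel
        _ = 0 := by rw [h, hd, sub_zero]
    have hc := hdouble B hb; rw [← hC] at hc
    have hp := hdouble C hc; rw [hCP] at hp
    rw [two_nsmul]; exact hp
  · have hb : B + B = 0 := by
      calc B + B = (P + (1:ℤ) • B + (-1:ℤ) • C) + (B + (1:ℤ) • C + (-1:ℤ) • P) := by abel
        _ = 0 := by rw [h, h2, add_zero]
    have hc := hdouble B hb; rw [← hC] at hc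
    have hp := hdouble C hc; rw [hCP] at hp
    constructor
    · calc P + B + C = (P + (1:ℤ) • B + (-1:ℤ) • C) + (C + C) := by abel
        _ = 0 := by rw [h, hc, add_zero]
    · intro _; rw [two_nsmul]; exact hp
  · have hp : P + P = 0 := by
      calc P + P = (P + (-1:ℤ) • B + (1:ℤ) • C) + (B + (-1:ℤ) • C + (1:ℤ) • P) := by abel
        _ = 0 := by rw [h, h2, add_zero]
    have hb := hdouble P hp; rw [← hB] at hb
    constructor
    · calc P + B + C = (P + (-1:ℤ) • B + (1:ℤ) • C) + (B + B) := by abel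
        _ = 0 := by rw [h, hb, add_zero]
    · intro _; rw [two_nsmul]; exact hp
  · have hc : C + C = 0 := by
      calc C + C = -((P + (-1:ℤ) • B + (-1:ℤ) • C) + (B + (-1:ℤ) • C + (-1:ℤ) • P)) := by abel
        _ = 0 := by rw [h, h2, add_zero, neg_zero]
    have hp := hdouble C hc; rw [hCP] at hp
    have hb : B + B = 0 := by
      have := hdouble P hp; rwa [← hB] at this
    constructor
    · calc P + B + C = (P + (-1:ℤ) • B + (-1:ℤ) • C) + (B + B) + (C + C) := by abel
        _ = 0 := by rw [h, hb, hc, add_zero, add_zero]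
    · intro _; rw [two_nsmul]; exact hp
end

section
/- Let E be an elliptic curve over F_q and let P ∈ E(F_{q^5}). Suppose there exist signs ε_1, ε_2, ε_3, ε_4 ∈ {+1, −1} such that P + ε_1 φ(P) + ε_2 φ²(P) + ε_3 φ³(P) + ε_4 φ⁴(P) = O. Then either P lies in the trace zero subgroup T_5, or P = Q + R for some Q ∈ E(F_q) with 3Q = O and some R ∈ E(F_{q^5}) with 2R = O and R ∈ T_5. -/
open WeierstrassCurve.Affine


section AbstractGroup

variable {A : Type*} [AddCommGroup A]

/-- The decomposition part, given the two key multiple relations. -/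
private lemma aux_bad (ψ : A →+ A) (P : A)
    (h5 : ∀ X : A, ψ (ψ (ψ (ψ (ψ X)))) = X)
    (h3S : (3 : ℤ) • (P + ψ P + ψ (ψ P) + ψ (ψ (ψ P)) + ψ (ψ (ψ (ψ P)))) = 0)
    (h2R : (2 : ℤ) • (P + (P + ψ P + ψ (ψ P) + ψ (ψ (ψ P)) + ψ (ψ (ψ (ψ P))))) = 0) :
    ∃ Q R : A, ψ Q = Q ∧ 3 • Q = 0 ∧ 2 • R = 0 ∧
      (R + ψ R + ψ (ψ R) + ψ (ψ (ψ R)) + ψ (ψ (ψ (ψ R))) = 0) ∧ P = Q + R := by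
  set S := P + ψ P + ψ (ψ P) + ψ (ψ (ψ P)) + ψ (ψ (ψ (ψ P))) with hS
  have hfix : ψ S = S := by
    rw [hS]
    simp only [map_add, h5]
    abel
  refine ⟨-S, P + S, ?_, ?_, ?_, ?_, by abel⟩
  · rw [map_neg, hfix]
  · have h3' : ((3 : ℕ) : ℤ) • (-S) = 0 := by
      push_cast
      rw [smul_neg, h3S, neg_zero]
    rwa [natCast_zsmul] at h3'
  · have h2' : ((2 : ℕ) : ℤ) • (P + S) = 0 := by
      push_cast
      exact h2R
    rwa [natCast_zsmul] at h2'
  · have e1 : ψ (P + S) = ψ P + S := by rw [map_add, hfix]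
    have e2 : ψ (ψ (P + S)) = ψ (ψ P) + S := by rw [e1, map_add, hfix]
    have e3 : ψ (ψ (ψ (P + S))) = ψ (ψ (ψ P)) + S := by rw [e2, map_add, hfix]
    have e4 : ψ (ψ (ψ (ψ (P + S)))) = ψ (ψ (ψ (ψ P))) + S := by rw [e3, map_add, hfix]
    rw [e4, e3, e2, e1]
    have : (P + S) + (ψ P + S) + (ψ (ψ P) + S) + (ψ (ψ (ψ P)) + S) + (ψ (ψ (ψ (ψ P))) + S)
        = (3:ℤ) • S + (3:ℤ) • S := by rw [hS]; module
    rw [this, h3S]; simp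

private lemma aux_group (ψ : A →+ A) (P : A)
    (h5 : ∀ X : A, ψ (ψ (ψ (ψ (ψ X)))) = X)
    {ε₁ ε₂ ε₃ ε₄ : ℤ}
    (hε₁ : ε₁ = 1 ∨ ε₁ = -1) (hε₂ : ε₂ = 1 ∨ ε₂ = -1)
    (hε₃ : ε₃ = 1 ∨ ε₃ = -1) (hε₄ : ε₄ = 1 ∨ ε₄ = -1)
    (h : P + ε₁ • ψ P + ε₂ • ψ (ψ P) + ε₃ • ψ (ψ (ψ P)) + ε₄ • ψ (ψ (ψ (ψ P))) = 0) :
    (P + ψ P + ψ (ψ P) + ψ (ψ (ψ P)) + ψ (ψ (ψ (ψ P))) = 0) ∨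
    ∃ Q R : A, ψ Q = Q ∧ 3 • Q = 0 ∧ 2 • R = 0 ∧
      (R + ψ R + ψ (ψ R) + ψ (ψ (ψ R)) + ψ (ψ (ψ (ψ R))) = 0) ∧ P = Q + R := by
  have h1 : ψ P + ε₁ • ψ (ψ P) + ε₂ • ψ (ψ (ψ P)) + ε₃ • ψ (ψ (ψ (ψ P))) + ε₄ • P = 0 := by
    have := congrArg ψ h
    simpa only [map_add, map_zsmul, map_zero, h5] using this
  have h2 : ψ (ψ P) + ε₁ • ψ (ψ (ψ P)) + ε₂ • ψ (ψ (ψ (ψ P))) + ε₃ • P + ε₄ • ψ P = 0 := by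
    have := congrArg ψ h1
    simpa only [map_add, map_zsmul, map_zero, h5] using this
  have h3 : ψ (ψ (ψ P)) + ε₁ • ψ (ψ (ψ (ψ P))) + ε₂ • P + ε₃ • ψ P + ε₄ • ψ (ψ P) = 0 := by
    have := congrArg ψ h2
    simpa only [map_add, map_zsmul, map_zero, h5] using this
  have h4 : ψ (ψ (ψ (ψ P))) + ε₁ • P + ε₂ • ψ P + ε₃ • ψ (ψ P) + ε₄ • ψ (ψ (ψ P)) = 0 := by
    have := congrArg ψ h3
    simpa only [map_add, map_zsmul, map_zero, h5] using this
  rcases hε₁ with rfl | rfl <;> rcases hε₂ with rfl | rfl <;>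
    rcases hε₃ with rfl | rfl <;> rcases hε₄ with rfl | rfl
  -- (1,1,1,1)
  · exact Or.inl (by linear_combination (norm := module) h)
  -- (1,1,1,-1) : omit h1
  · exact Or.inr (aux_bad ψ P h5
      (by linear_combination (norm := module) h + h1 + h2 + h3 + h4)
      (by linear_combination (norm := module) h + h2 + h3 + h4))
  -- (1,1,-1,1) : omit h2
  · exact Or.inr (aux_bad ψ P h5
      (by linear_combination (norm := module) h + h1 + h2 + h3 + h4)
      (by linear_combination (norm := module) h + h1 + h3 + h4))
  -- (1,1,-1,-1)
  · exact Or.inl (by linear_combination (norm := module) h + h1 + h2 + h3 + h4)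
  -- (1,-1,1,1) : omit h3
  · exact Or.inr (aux_bad ψ P h5
      (by linear_combination (norm := module) h + h1 + h2 + h3 + h4)
      (by linear_combination (norm := module) h + h1 + h2 + h4))
  -- (1,-1,1,-1)
  · exact Or.inl (by linear_combination (norm := module) h + h1 + h2 + h3 + h4)
  -- (1,-1,-1,1)
  · exact Or.inl (by linear_combination (norm := module) h + h1 + h2 + h3 + h4)
  -- (1,-1,-1,-1)
  · exact Or.inl (by linear_combination (norm := module) -h - h1 - h2 - h3 - h4)
  -- (-1,1,1,1) : omit h4
  · exact Or.inr (aux_bad ψ P h5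
      (by linear_combination (norm := module) h + h1 + h2 + h3 + h4)
      (by linear_combination (norm := module) h + h1 + h2 + h3))
  -- (-1,1,1,-1)
  · exact Or.inl (by linear_combination (norm := module) h + h1 + h2 + h3 + h4)
  -- (-1,1,-1,1)
  · exact Or.inl (by linear_combination (norm := module) h + h1 + h2 + h3 + h4)
  -- (-1,1,-1,-1)
  · exact Or.inl (by linear_combination (norm := module) -h - h1 - h2 - h3 - h4)
  -- (-1,-1,1,1)
  · exact Or.inl (by linear_combination (norm := module) h + h1 + h2 + h3 + h4)
  -- (-1,-1,1,-1)
  · exact Or.inl (by linear_combination (norm := module) -h - h1 - h2 - h3 - h4)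
  -- (-1,-1,-1,1)
  · exact Or.inl (by linear_combination (norm := module) -h - h1 - h2 - h3 - h4)
  -- (-1,-1,-1,-1)
  · exact Or.inr (aux_bad ψ P h5
      (by linear_combination (norm := module) -h - h1 - h2 - h3 - h4)
      (by linear_combination (norm := module) -h1 - h2 - h3 - h4))

end AbstractGroup



private lemma some_eq_some' {R : Type*} [CommRing R] {W : WeierstrassCurve.Affine R}
    {x x' y y' : R} (hx : x = x') (hy : y = y')
    (h : W.Nonsingular x y) (h' : W.Nonsingular x' y') :
    Point.some _ _ h = Point.some _ _ h' := by subst hx; subst hy; rfl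

open Classical in
private lemma point_map_pointwise_id {Fq K : Type*} [Field Fq] [Field K] [Algebra Fq K]
    (W : WeierstrassCurve.Affine Fq) (g : K →ₐ[Fq] K) (hg : ∀ x, g x = x) (X : (W⁄K).Point) :
    Point.map (W' := W) g X = X := by
  cases X with
  | zero => rfl
  | some _ _ hns => rw [Point.map_some]; exact some_eq_some' (hg _) (hg _) _ _

private lemma fixed_mem_algebraMap_range {Fq K : Type*} [Field Fq] [Fintype Fq] [Field K]
    [Fintype K] [Algebra Fq K] (x : K) (hx : x ^ Fintype.card Fq = x) :
    ∃ x₀ : Fq, algebraMap Fq K x₀ = x := by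
  classical
  set q := Fintype.card Fq with hq
  have hq1 : 1 < q := Fintype.one_lt_card
  set p : Polynomial K := Polynomial.X ^ q - Polynomial.X with hp
  have hp0 : p ≠ 0 := FiniteField.X_pow_card_sub_X_ne_zero K hq1
  have hroot : x ∈ p.roots := by
    rw [Polynomial.mem_roots hp0]
    simp [hp, Polynomial.IsRoot, sub_eq_zero, hx]
  set T : Finset K := p.roots.toFinset with hT
  set I : Finset K := Finset.univ.image (algebraMap Fq K) with hI
  have hIT : I ⊆ T := by
    intro z hz
    rw [hI, Finset.mem_image] at hz
    obtain ⟨a, -, rfl⟩ := hz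
    rw [hT, Multiset.mem_toFinset, Polynomial.mem_roots hp0]
    simp only [hp, Polynomial.IsRoot, Polynomial.eval_sub, Polynomial.eval_pow,
      Polynomial.eval_X, sub_eq_zero]
    rw [← map_pow]
    exact congrArg _ (FiniteField.pow_card a)
  have hcardI : I.card = q := by
    rw [hI, Finset.card_image_of_injective _ (algebraMap Fq K).injective, Finset.card_univ]
  have hcardT : T.card ≤ q :=
    le_trans (Multiset.toFinset_card_le _)
      (le_trans (Polynomial.card_roots' p)
        (le_of_eq (FiniteField.X_pow_card_sub_X_natDegree_eq K hq1)))
  have hTI : I = T := Finset.eq_of_subset_of_card_le hIT (by rw [hcardI]; exact hcardT)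
  have hxI : x ∈ I := by rw [hTI, hT, Multiset.mem_toFinset]; exact hroot
  rw [hI, Finset.mem_image] at hxI
  obtain ⟨a, -, ha⟩ := hxI
  exact ⟨a, ha⟩

open Classical in
/-- Let `E` be an elliptic curve over `F_q` and `P ∈ E(F_{q⁵})`. If there are
signs `ε₁, ε₂, ε₃, ε₄ ∈ {+1, −1}` with `P + ε₁ φ(P) + ε₂ φ²(P) + ε₃ φ³(P) + ε₄ φ⁴(P) = O`, then
either `P ∈ T_5`, or `P = Q + R` with `Q ∈ E(F_q)`, `3Q = O`, `R ∈ E(F_{q⁵})`, `2R = O`,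
`R ∈ T_5`. -/
theorem traceZero_or_decomposition_of_sign_sum_eq_zero_quintic
    {Fq K : Type*} [Field Fq] [Fintype Fq] [Field K] [Fintype K] [Algebra Fq K]
    (hcard : Fintype.card K = Fintype.card Fq ^ 5)
    (W : WeierstrassCurve.Affine Fq) (hΔ : W.Δ ≠ 0)
    (φ : K →ₐ[Fq] K) (hφ : ∀ x : K, φ x = x ^ Fintype.card Fq)
    (P : (W⁄K).Point) (ε₁ ε₂ ε₃ ε₄ : ℤ)
    (hε₁ : ε₁ = 1 ∨ ε₁ = -1) (hε₂ : ε₂ = 1 ∨ ε₂ = -1)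
    (hε₃ : ε₃ = 1 ∨ ε₃ = -1) (hε₄ : ε₄ = 1 ∨ ε₄ = -1)
    (h : P + ε₁ • (⇑(Point.map (W' := W) φ))^[1] P + ε₂ • (⇑(Point.map (W' := W) φ))^[2] P +
        ε₃ • (⇑(Point.map (W' := W) φ))^[3] P + ε₄ • (⇑(Point.map (W' := W) φ))^[4] P = 0) :
    (P + (⇑(Point.map (W' := W) φ))^[1] P + (⇑(Point.map (W' := W) φ))^[2] P +
        (⇑(Point.map (W' := W) φ))^[3] P + (⇑(Point.map (W' := W) φ))^[4] P = 0) ∨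
      ∃ Q R : (W⁄K).Point,
        (∃ Q₀ : (W⁄Fq).Point, Point.baseChange (W' := W) Fq K Q₀ = Q) ∧ 3 • Q = 0 ∧
        2 • R = 0 ∧
        (R + (⇑(Point.map (W' := W) φ))^[1] R + (⇑(Point.map (W' := W) φ))^[2] R +
          (⇑(Point.map (W' := W) φ))^[3] R + (⇑(Point.map (W' := W) φ))^[4] R = 0) ∧
        P = Q + R := by
  have i1 : ∀ X : (W⁄K).Point, (⇑(Point.map (W' := W) φ))^[1] X = Point.map (W' := W) φ X := fun _ => rfl
  have i2 : ∀ X : (W⁄K).Point, (⇑(Point.map (W' := W) φ))^[2] X =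
      Point.map (W' := W) φ (Point.map (W' := W) φ X) := fun _ => rfl
  have i3 : ∀ X : (W⁄K).Point, (⇑(Point.map (W' := W) φ))^[3] X =
      Point.map (W' := W) φ (Point.map (W' := W) φ (Point.map (W' := W) φ X)) := fun _ => rfl
  have i4 : ∀ X : (W⁄K).Point, (⇑(Point.map (W' := W) φ))^[4] X =
      Point.map (W' := W) φ (Point.map (W' := W) φ (Point.map (W' := W) φ (Point.map (W' := W) φ X))) := fun _ => rfl
  have hq5 : ∀ x : K, φ (φ (φ (φ (φ x)))) = x := by
    intro x
    rw [hφ, hφ, hφ, hφ, hφ, ← pow_mul, ← pow_mul, ← pow_mul, ← pow_mul,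
      show Fintype.card Fq * (Fintype.card Fq * (Fintype.card Fq * (Fintype.card Fq *
        Fintype.card Fq))) = Fintype.card K by rw [hcard]; ring]
    exact FiniteField.pow_card x
  have h5 : ∀ X : (W⁄K).Point, Point.map (W' := W) φ (Point.map (W' := W) φ (Point.map (W' := W) φ (Point.map (W' := W) φ
      (Point.map (W' := W) φ X)))) = X := by
    intro X
    rw [Point.map_map, Point.map_map, Point.map_map, Point.map_map]
    exact point_map_pointwise_id W _ (fun x => by
      exact hq5 x) X
  simp only [i1, i2, i3, i4] at h ⊢
  rcases aux_group (Point.map (W' := W) φ) P h5 hε₁ hε₂ hε₃ hε₄ h with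
    hl | ⟨Q, R, hfix, h3Q, h2R, htr, hPQR⟩
  · exact Or.inl hl
  · refine Or.inr ⟨Q, R, ?_, h3Q, h2R, htr, hPQR⟩
    cases Q with
    | zero => exact ⟨0, rfl⟩
    | some x y hns =>
      rw [Point.map_some] at hfix
      obtain ⟨hx, hy⟩ := Point.some.inj hfix
      obtain ⟨x₀, rfl⟩ := fixed_mem_algebraMap_range x (by rw [← hφ]; exact hx)
      obtain ⟨y₀, rfl⟩ := fixed_mem_algebraMap_range y (by rw [← hφ]; exact hy)
      have hns₀ : (W⁄Fq).Nonsingular x₀ y₀ := by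
        have h' := hns
        rwa [show algebraMap Fq K x₀ = (Algebra.ofId Fq K) x₀ from rfl,
          show algebraMap Fq K y₀ = (Algebra.ofId Fq K) y₀ from rfl,
          W.baseChange_nonsingular (Algebra.ofId Fq K).injective] at h'
      exact ⟨Point.some _ _ hns₀, by rw [Point.map_some]; rfl⟩
end

section
/- Let E be an elliptic curve over F_q and let P ∈ E(F_{q^5}) satisfy P + φ(P) + φ²(P) + φ³(P) − φ⁴(P) = O. Then 2P is an F_q-rational point with 3(2P) = O, and P = Q + R where Q = −2P satisfies Q ∈ E(F_q) and 3Q = O, and R = 3P satisfies 2R = O and R + φ(R) + φ²(R) + φ³(R) + φ⁴(R) = O. -/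
open WeierstrassCurve.Affine

open Classical in
/-- Let `E` be an elliptic curve over `F_q` and `P ∈ E(F_{q⁵})` with
`P + φ(P) + φ²(P) + φ³(P) − φ⁴(P) = O`. Then `2P` is `F_q`-rational (i.e. `φ(2P) = 2P`) with
`3(2P) = O`, and `P = Q + R` where `Q = −2P` satisfies `Q ∈ E(F_q)` and `3Q = O`, and `R = 3P`
satisfies `2R = O` and `R + φ(R) + φ²(R) + φ³(R) + φ⁴(R) = O`. -/
theorem decomposition_of_one_minus_sign_quintic
    {Fq K : Type*} [Field Fq] [Fintype Fq] [Field K] [Fintype K] [Algebra Fq K]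
    (hcard : Fintype.card K = Fintype.card Fq ^ 5)
    (W : WeierstrassCurve.Affine Fq) (hΔ : W.Δ ≠ 0)
    (φ : K →ₐ[Fq] K) (hφ : ∀ x : K, φ x = x ^ Fintype.card Fq)
    (P : (W⁄K).Point)
    (h : P + (⇑(Point.map (W' := W) φ))^[1] P + (⇑(Point.map (W' := W) φ))^[2] P +
        (⇑(Point.map (W' := W) φ))^[3] P - (⇑(Point.map (W' := W) φ))^[4] P = 0) :
    Point.map (W' := W) φ ((2 : ℕ) • P) = (2 : ℕ) • P ∧ (3 : ℕ) • ((2 : ℕ) • P) = 0 ∧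
      P = -((2 : ℕ) • P) + (3 : ℕ) • P ∧
      Point.map (W' := W) φ (-((2 : ℕ) • P)) = -((2 : ℕ) • P) ∧ (3 : ℕ) • (-((2 : ℕ) • P)) = 0 ∧
      (2 : ℕ) • ((3 : ℕ) • P) = 0 ∧
      ((3 : ℕ) • P + (⇑(Point.map (W' := W) φ))^[1] ((3 : ℕ) • P) +
        (⇑(Point.map (W' := W) φ))^[2] ((3 : ℕ) • P) + (⇑(Point.map (W' := W) φ))^[3] ((3 : ℕ) • P) +
        (⇑(Point.map (W' := W) φ))^[4] ((3 : ℕ) • P) = 0) := by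
  have hcomp : ∀ x : K, φ (φ (φ (φ (φ x)))) = x := by
    intro x
    simp only [hφ, ← pow_mul]
    rw [show Fintype.card Fq * Fintype.card Fq * Fintype.card Fq * Fintype.card Fq *
      Fintype.card Fq = Fintype.card K by rw [hcard]; ring, FiniteField.pow_card]
  have heq : ((((φ.comp φ).comp φ).comp φ).comp φ) = AlgHom.id Fq K := AlgHom.ext hcomp
  have hid : ∀ S : (W⁄K).Point, Point.map (W' := W) (AlgHom.id Fq K) S = S := by
    intro S; cases S <;> rfl
  have hit : ∀ S : (W⁄K).Point, Point.map (W' := W) φ (Point.map (W' := W) φ (Point.map (W' := W) φ (Point.map (W' := W) φ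
      (Point.map (W' := W) φ S)))) = S := by
    intro S
    rw [Point.map_map, Point.map_map, Point.map_map, Point.map_map, heq, hid]
  set f := Point.map (W' := W) φ with hf
  simp only [Function.iterate_succ, Function.iterate_zero, Function.comp_apply, id_eq] at h ⊢
  set p0 := P
  set p1 := f p0 with hp1
  set p2 := f p1 with hp2
  set p3 := f p2 with hp3
  set p4 := f p3 with hp4
  have h5 : f p4 = p0 := hit P
  -- h : p0 + p1 + p2 + p3 - p4 = 0
  have hA : p0 + p1 + p2 + p3 = p4 := by rwa [sub_eq_zero] at h
  have hB : p1 + p2 + p3 + p4 = p0 := by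
    have := congrArg f hA
    simpa only [map_add, ← hp1, ← hp2, ← hp3, ← hp4, h5] using this
  have hC : p0 + p0 = p4 + p4 := by
    calc p0 + p0 = (p1 + p2 + p3 + p4) + p0 := by rw [hB]
      _ = (p0 + p1 + p2 + p3) + p4 := by abel
      _ = p4 + p4 := by rw [hA]
  have e1 : p1 + p1 = p0 + p0 := by
    have := congrArg f hC
    simpa only [map_add, ← hp1, h5] using this
  have e2 : p2 + p2 = p0 + p0 := by
    have h' := congrArg f e1
    simp only [map_add, ← hp2, ← hp1] at h'
    exact h'.trans e1
  have e3 : p3 + p3 = p0 + p0 := by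
    have h' := congrArg f e2
    simp only [map_add, ← hp3, ← hp1] at h'
    exact h'.trans e1
  have e4 : p4 + p4 = p0 + p0 := hC.symm
  have key1 : f ((2 : ℕ) • p0) = (2 : ℕ) • p0 := by
    rw [two_nsmul, map_add, ← hp1, e1, ← two_nsmul]
  have key2 : (3 : ℕ) • ((2 : ℕ) • p0) = 0 := by
    have hdouble : (p0 + p1 + p2 + p3) + (p0 + p1 + p2 + p3) = p4 + p4 := by rw [hA]
    have : (p0 + p0) + (p1 + p1) + (p2 + p2) + (p3 + p3) = p4 + p4 := by
      rw [← hdouble]; abel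
    rw [e1, e2, e3, e4] at this
    -- this : (p0+p0) + (p0+p0) + (p0+p0) + (p0+p0) = p0 + p0
    have h3 : (p0 + p0) + (p0 + p0) + (p0 + p0) = 0 := by
      have := sub_eq_zero.mpr this
      rw [← this]; abel
    simpa [two_nsmul, succ_nsmul, add_assoc] using h3
  refine ⟨key1, key2, by abel, by rw [map_neg, key1], by rw [smul_neg, key2, neg_zero],
    by rw [smul_smul, show 2 * 3 = 3 * 2 from rfl, ← smul_smul, key2], ?_⟩
  have hmap : ∀ S : (W⁄K).Point, f ((3:ℕ) • S) = (3:ℕ) • f S := fun S => map_nsmul f 3 S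
  rw [hmap, hmap, hmap, hmap, ← hp1, ← hp2, ← hp3, ← hp4, ← smul_add, ← smul_add, ← smul_add,
    ← smul_add]
  have hsum : p0 + p1 + p2 + p3 + p4 = p0 + p0 := by rw [hA, hC]
  rw [hsum, ← two_nsmul]
  exact key2
end

section
/- Let E be an elliptic curve over F_q and let P ∈ E(F_{q^5}) satisfy P + φ(P) + φ²(P) − φ³(P) − φ⁴(P) = O. Then 2P = O, and consequently P + φ(P) + φ²(P) + φ³(P) + φ⁴(P) = O, i.e. P lies in the trace zero subgroup T_5. -/
open WeierstrassCurve.Affine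

open Classical in
/-- Let `E` be an elliptic curve over `F_q` and `P ∈ E(F_{q⁵})` with
`P + φ(P) + φ²(P) − φ³(P) − φ⁴(P) = O`. Then `2P = O`, and consequently
`P + φ(P) + φ²(P) + φ³(P) + φ⁴(P) = O`, i.e. `P ∈ T_5`. -/
theorem two_smul_eq_zero_of_two_minuses_in_a_row_quintic
    {Fq K : Type*} [Field Fq] [Fintype Fq] [Field K] [Fintype K] [Algebra Fq K]
    (hcard : Fintype.card K = Fintype.card Fq ^ 5)
    (W : WeierstrassCurve.Affine Fq) (hΔ : W.Δ ≠ 0)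
    (φ : K →ₐ[Fq] K) (hφ : ∀ x : K, φ x = x ^ Fintype.card Fq)
    (P : (W⁄K).Point)
    (h : P + (⇑(Point.map (W' := W) φ))^[1] P + (⇑(Point.map (W' := W) φ))^[2] P -
        (⇑(Point.map (W' := W) φ))^[3] P - (⇑(Point.map (W' := W) φ))^[4] P = 0) :
    (2 : ℕ) • P = 0 ∧
      P + (⇑(Point.map (W' := W) φ))^[1] P + (⇑(Point.map (W' := W) φ))^[2] P +
        (⇑(Point.map (W' := W) φ))^[3] P + (⇑(Point.map (W' := W) φ))^[4] P = 0 := by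
  set F := Point.map (W' := W) φ with hF
  have hit1 : ∀ Q : (W⁄K).Point, (⇑F)^[1] Q = F Q := fun Q => rfl
  have hit2 : ∀ Q : (W⁄K).Point, (⇑F)^[2] Q = F (F Q) := fun Q => rfl
  have hit3 : ∀ Q : (W⁄K).Point, (⇑F)^[3] Q = F (F (F Q)) := fun Q => rfl
  have hit4 : ∀ Q : (W⁄K).Point, (⇑F)^[4] Q = F (F (F (F Q))) := fun Q => rfl
  rw [hit1, hit2, hit3, hit4] at h
  rw [hit1, hit2, hit3, hit4]
  -- φ⁵ = id on K
  have hq5 : ∀ x : K, φ (φ (φ (φ (φ x)))) = x := by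
    intro x
    rw [hφ, hφ, hφ, hφ, hφ, ← pow_mul, ← pow_mul, ← pow_mul, ← pow_mul]
    have e : Fintype.card Fq * (Fintype.card Fq * (Fintype.card Fq * (Fintype.card Fq *
        Fintype.card Fq))) = Fintype.card Fq ^ 5 := by ring
    rw [e, ← hcard, FiniteField.pow_card]
  -- F⁵ = id on points
  have h5 : ∀ Q : (W⁄K).Point, F (F (F (F (F Q)))) = Q := by
    intro Q
    have hcomp : ((((φ.comp φ).comp φ).comp φ).comp φ) = AlgHom.id Fq K := by
      ext x
      simpa using hq5 x
    have hid : Point.map (W' := W) (AlgHom.id Fq K) Q = Q := by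
      cases Q <;> rfl
    show Point.map (W' := W) φ (Point.map (W' := W) φ (Point.map (W' := W) φ (Point.map (W' := W) φ (Point.map (W' := W) φ Q)))) = Q
    rw [Point.map_map, Point.map_map, Point.map_map, Point.map_map, hcomp, hid]
  -- apply F to h
  have h' : F P + F (F P) + F (F (F P)) - F (F (F (F P))) - P = 0 := by
    have := congrArg F h
    simp only [map_add, map_sub, map_zero, h5 P] at this
    exact this
  -- 2P = 2 F³P
  have key : (2 : ℕ) • P - (2 : ℕ) • (F (F (F P))) = 0 := by
    have e : (2 : ℕ) • P - (2 : ℕ) • (F (F (F P))) =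
        (P + F P + F (F P) - F (F (F P)) - F (F (F (F P)))) -
          (F P + F (F P) + F (F (F P)) - F (F (F (F P))) - P) := by abel
    rw [e, h, h', sub_zero]
  have h2 : (2 : ℕ) • (F (F (F P))) = (2 : ℕ) • P := by
    have := sub_eq_zero.mp key
    exact this.symm
  -- F³ fixes Q := 2P
  have hQ3 : F (F (F ((2 : ℕ) • P))) = (2 : ℕ) • P := by
    rw [map_nsmul, map_nsmul, map_nsmul, h2]
  -- hence F fixes Q, since F⁶ Q = F³(F³ Q) = Q and F⁶ Q = F Q
  have hQ1 : F ((2 : ℕ) • P) = (2 : ℕ) • P := by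
    have e1 : F (F (F (F (F (F ((2 : ℕ) • P)))))) = (2 : ℕ) • P := by
      rw [hQ3, hQ3]
    have e2 : F (F (F (F (F (F ((2 : ℕ) • P)))))) = F ((2 : ℕ) • P) := by
      rw [h5 ((2 : ℕ) • P)]
    exact e2.symm.trans e1
  -- 2 • (F^i P) = 2 • P for i = 1,2,3,4
  have c1 : (2 : ℕ) • (F P) = (2 : ℕ) • P := by rw [← map_nsmul, hQ1]
  have c2 : (2 : ℕ) • (F (F P)) = (2 : ℕ) • P := by rw [← map_nsmul, ← map_nsmul, hQ1, hQ1]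
  have c3 : (2 : ℕ) • (F (F (F P))) = (2 : ℕ) • P := by
    rw [← map_nsmul, ← map_nsmul, ← map_nsmul, hQ1, hQ1, hQ1]
  have c4 : (2 : ℕ) • (F (F (F (F P)))) = (2 : ℕ) • P := by
    rw [← map_nsmul, ← map_nsmul, ← map_nsmul, ← map_nsmul, hQ1, hQ1, hQ1, hQ1]
  -- double h
  have h2smul : (2 : ℕ) • P = 0 := by
    have hd := congrArg (fun R : (W⁄K).Point => (2 : ℕ) • R) h
    simp only [smul_add, smul_sub, smul_zero] at hd
    rw [c1, c2, c3, c4] at hd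
    have e : (2 : ℕ) • P + (2 : ℕ) • P + (2 : ℕ) • P - (2 : ℕ) • P - (2 : ℕ) • P
        = (2 : ℕ) • P := by abel
    rw [e] at hd
    exact hd
  refine ⟨h2smul, ?_⟩
  have hd3 : (2 : ℕ) • (F (F (F P))) = 0 := by rw [c3, h2smul]
  have hd4 : (2 : ℕ) • (F (F (F (F P)))) = 0 := by rw [c4, h2smul]
  have e : P + F P + F (F P) + F (F (F P)) + F (F (F (F P))) =
      (P + F P + F (F P) - F (F (F P)) - F (F (F (F P)))) +
        (2 : ℕ) • (F (F (F P))) + (2 : ℕ) • (F (F (F (F P)))) := by abel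
  rw [e, h, hd3, hd4, zero_add, add_zero]
end

section
/- Let E be an elliptic curve over F_q and let P ∈ E(F_{q^5}) satisfy P + φ(P) − φ²(P) + φ³(P) − φ⁴(P) = O. Then 2P = O, and consequently P + φ(P) + φ²(P) + φ³(P) + φ⁴(P) = O, i.e. P lies in the trace zero subgroup T_5. -/
open WeierstrassCurve.Affine

open Classical in
/-- Let `E` be an elliptic curve over `F_q` and `P ∈ E(F_{q⁵})` with
`P + φ(P) − φ²(P) + φ³(P) − φ⁴(P) = O`. Then `2P = O`, and consequently
`P + φ(P) + φ²(P) + φ³(P) + φ⁴(P) = O`, i.e. `P ∈ T_5`. -/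
theorem two_smul_eq_zero_of_two_minuses_not_in_a_row_quintic
    {Fq K : Type*} [Field Fq] [Fintype Fq] [Field K] [Fintype K] [Algebra Fq K]
    (hcard : Fintype.card K = Fintype.card Fq ^ 5)
    (W : WeierstrassCurve.Affine Fq) (hΔ : W.Δ ≠ 0)
    (φ : K →ₐ[Fq] K) (hφ : ∀ x : K, φ x = x ^ Fintype.card Fq)
    (P : (W⁄K).Point)
    (h : P + (⇑(Point.map (W' := W) φ))^[1] P - (⇑(Point.map (W' := W) φ))^[2] P +
        (⇑(Point.map (W' := W) φ))^[3] P - (⇑(Point.map (W' := W) φ))^[4] P = 0) :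
    (2 : ℕ) • P = 0 ∧
      P + (⇑(Point.map (W' := W) φ))^[1] P + (⇑(Point.map (W' := W) φ))^[2] P +
        (⇑(Point.map (W' := W) φ))^[3] P + (⇑(Point.map (W' := W) φ))^[4] P = 0 := by
  set f := Point.map (W' := W) φ with hf
  simp only [Function.iterate_succ, Function.iterate_zero, Function.comp_apply, id_eq] at h ⊢
  -- φ iterated 5 times is the identity on K
  have key : ∀ x : K, φ (φ (φ (φ (φ x)))) = x := by
    intro x
    rw [hφ, hφ, hφ, hφ, hφ, ← pow_mul, ← pow_mul, ← pow_mul, ← pow_mul,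
      show Fintype.card Fq * (Fintype.card Fq * (Fintype.card Fq * (Fintype.card Fq *
        Fintype.card Fq))) = Fintype.card K by rw [hcard]; ring, FiniteField.pow_card]
  -- f iterated 5 times is the identity on points
  have h5 : ∀ Q : (W⁄K).Point, f (f (f (f (f Q)))) = Q := by
    intro Q
    cases Q with
    | zero => rfl
    | some hQ =>
        simp only [hf, Point.map_some, Point.some.injEq]
        exact ⟨key _, key _⟩
  -- apply f to the hypothesis
  have h2 : f P + f (f P) - f (f (f P)) + f (f (f (f P))) - P = 0 := by
    have := congrArg f h
    simp only [map_add, map_sub, map_zero] at this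
    rwa [h5 P] at this
  have h3 : f P + f P = 0 := by
    rw [show f P + f P = (P + f P - f (f P) + f (f (f P)) - f (f (f (f P)))) +
        (f P + f (f P) - f (f (f P)) + f (f (f (f P))) - P) by abel, h, h2, add_zero]
  have h2P : P + P = 0 := by
    apply Point.map_injective (W' := W) φ
    simpa only [map_add, map_zero] using h3
  have hA : f (f P) + f (f P) = 0 := by
    have := congrArg (fun Q => f (f Q)) h2P
    simpa only [map_add, map_zero] using this
  have hB : f (f (f (f P))) + f (f (f (f P))) = 0 := by
    have := congrArg (fun Q => f (f (f (f Q)))) h2P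
    simpa only [map_add, map_zero] using this
  refine ⟨by rw [two_nsmul, h2P], ?_⟩
  rw [show P + f P + f (f P) + f (f (f P)) + f (f (f (f P))) =
      (P + f P - f (f P) + f (f (f P)) - f (f (f (f P)))) +
      ((f (f P) + f (f P)) + (f (f (f (f P))) + f (f (f (f P))))) by abel, h, hA, hB]
  simp
end

section
/- Let K be an algebraically closed field of characteristic different from 2 and 3, let A, B ∈ K with 4A³ + 27B² ≠ 0, and let E : y² = x³ + Ax + B be the corresponding elliptic curve with neutral element O. For any Z_1, Z_2, Z_3 ∈ K, one has f_3(Z_1, Z_2, Z_3) = 0 if and only if there exist Y_1, Y_2, Y_3 ∈ K such that Y_i² = Z_i³ + A Z_i + B for i = 1,2,3 and (Z_1, Y_1) + (Z_2, Y_2) + (Z_3, Y_3) = O in the group E(K). -/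
open WeierstrassCurve.Affine

/-- Key factorization of the third Semaev polynomial. -/
lemma semaev3_factor {R : Type*} [CommRing R] (A B z₁ z₂ z₃ y₁ y₂ : R)
    (h₁ : y₁ ^ 2 = z₁ ^ 3 + A * z₁ + B) (h₂ : y₂ ^ 2 = z₂ ^ 3 + A * z₂ + B) :
    (z₁ - z₂) ^ 2 * semaev3 A B z₁ z₂ z₃ =
      ((z₁ - z₂) ^ 2 * (z₃ + z₁ + z₂) - (y₁ - y₂) ^ 2) *
        ((z₁ - z₂) ^ 2 * (z₃ + z₁ + z₂) - (y₁ + y₂) ^ 2) := by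
  unfold semaev3
  linear_combination
    (2 * (z₁ - z₂) ^ 2 * (z₃ + z₁ + z₂) -
      (y₁ ^ 2 - y₂ ^ 2 + (z₁ ^ 3 + A * z₁ + B) - (z₂ ^ 3 + A * z₂ + B))) * h₁ +
    (2 * (z₁ - z₂) ^ 2 * (z₃ + z₁ + z₂) +
      (y₁ ^ 2 - y₂ ^ 2 + (z₁ ^ 3 + A * z₁ + B) - (z₂ ^ 3 + A * z₂ + B))) * h₂

/-- Key identity for the third Semaev polynomial in the doubling case. -/
lemma semaev3_diag {R : Type*} [CommRing R] (A B z₁ z₃ y₁ : R)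
    (h₁ : y₁ ^ 2 = z₁ ^ 3 + A * z₁ + B) :
    semaev3 A B z₁ z₁ z₃ = (3 * z₁ ^ 2 + A) ^ 2 - 4 * y₁ ^ 2 * (z₃ + 2 * z₁) := by
  unfold semaev3
  linear_combination (4 * (z₃ + 2 * z₁)) * h₁

open Classical in
/-- Let `K` be an algebraically closed field of characteristic `≠ 2, 3`, let
`A, B ∈ K` with `4A³ + 27B² ≠ 0`, and let `E : y² = x³ + Ax + B`. For `Z₁, Z₂, Z₃ ∈ K` one has
`f_3(Z₁, Z₂, Z₃) = 0` iff there exist `Y₁, Y₂, Y₃ ∈ K` with `Yᵢ² = Zᵢ³ + A Zᵢ + B` such that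
the points `(Zᵢ, Yᵢ)` lie on `E` and sum to `O` in `E(K)`. -/
theorem semaev3_eq_zero_iff_exists_sum_eq_zero
    {K : Type*} [Field K] [IsAlgClosed K]
    (hchar2 : ringChar K ≠ 2) (hchar3 : ringChar K ≠ 3)
    (A B : K) (hAB : 4 * A ^ 3 + 27 * B ^ 2 ≠ 0)
    (W : WeierstrassCurve.Affine K) (hW : W = ⟨0, 0, 0, A, B⟩)
    (Z₁ Z₂ Z₃ : K) :
    semaev3 A B Z₁ Z₂ Z₃ = 0 ↔
      ∃ (Y₁ Y₂ Y₃ : K) (h₁ : W.Nonsingular Z₁ Y₁) (h₂ : W.Nonsingular Z₂ Y₂)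
        (h₃ : W.Nonsingular Z₃ Y₃),
        Y₁ ^ 2 = Z₁ ^ 3 + A * Z₁ + B ∧ Y₂ ^ 2 = Z₂ ^ 3 + A * Z₂ + B ∧
        Y₃ ^ 2 = Z₃ ^ 3 + A * Z₃ + B ∧
        Point.some _ _ h₁ + Point.some _ _ h₂ + Point.some _ _ h₃ = (0 : W.Point) := by
  have h2 : (2 : K) ≠ 0 := Ring.two_ne_zero hchar2
  have ha₁ : W.a₁ = 0 := by rw [hW]
  have ha₂ : W.a₂ = 0 := by rw [hW]
  have ha₃ : W.a₃ = 0 := by rw [hW]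
  have ha₄ : W.a₄ = A := by rw [hW]
  have ha₆ : W.a₆ = B := by rw [hW]
  have hΔ : W.Δ ≠ 0 := by
    intro h
    apply hAB
    rw [WeierstrassCurve.Δ, WeierstrassCurve.b₂, WeierstrassCurve.b₄, WeierstrassCurve.b₆,
      WeierstrassCurve.b₈, ha₁, ha₂, ha₃, ha₄, ha₆] at h
    have h16 : (2 : K) ^ 4 ≠ 0 := pow_ne_zero _ h2
    apply mul_left_cancel₀ h16
    rw [mul_zero]
    linear_combination -h
  have hnegY : ∀ x y : K, W.negY x y = -y := by
    intro x y; rw [negY, ha₁, ha₃]; ring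
  have haddX : ∀ x₁ x₂ L : K, W.addX x₁ x₂ L = L ^ 2 - x₁ - x₂ := by
    intro x₁ x₂ L; rw [addX, ha₁, ha₂]; ring
  have hNS : ∀ x y : K, y ^ 2 = x ^ 3 + A * x + B → W.Nonsingular x y := by
    intro x y h
    refine (W.equation_iff_nonsingular_of_Δ_ne_zero hΔ).mp ?_
    rw [equation_iff, ha₁, ha₂, ha₃, ha₄, ha₆]
    linear_combination h
  have hEQ : ∀ x y : K, W.Nonsingular x y → y ^ 2 = x ^ 3 + A * x + B := by
    intro x y h
    have := (W.equation_iff x y).mp h.1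
    rw [ha₁, ha₂, ha₃, ha₄, ha₆] at this
    linear_combination this
  constructor
  · -- forward direction
    intro hf
    by_cases hx : Z₁ = Z₂
    · subst hx
      by_cases hc : Z₁ ^ 3 + A * Z₁ + B = 0
      · exfalso
        apply hAB
        have hs2 : (3 * Z₁ ^ 2 + A) ^ 2 = 0 := by
          unfold semaev3 at hf
          linear_combination hf + (4 * (Z₃ + 2 * Z₁)) * hc
        have hs : 3 * Z₁ ^ 2 + A = 0 := by
          exact pow_eq_zero_iff (n := 2) (by norm_num) |>.mp hs2
        linear_combination (27 * (Z₁ ^ 3 + A * Z₁ + B) + 108 * Z₁ ^ 3) * hc +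
          (4 * (3 * Z₁ ^ 2 + A) ^ 2 - 9 * (3 * Z₁ ^ 2 + A) * Z₁ ^ 2 -
            54 * (Z₁ ^ 3 + A * Z₁ + B) * Z₁) * hs
      · obtain ⟨Y₁, hY₁⟩ := IsAlgClosed.exists_pow_nat_eq (Z₁ ^ 3 + A * Z₁ + B) two_pos
        have hY₁0 : Y₁ ≠ 0 := by
          intro h; apply hc; rw [← hY₁, h]; ring
        have h₁ : W.Nonsingular Z₁ Y₁ := hNS _ _ hY₁
        have hy : Y₁ ≠ W.negY Z₁ Y₁ := by
          rw [hnegY]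
          intro h
          apply hY₁0
          have : 2 * Y₁ = 0 := by linear_combination h
          exact (mul_eq_zero.mp this).resolve_left h2
        have hD2 : 4 * Y₁ ^ 2 * (Z₃ + 2 * Z₁) = (3 * Z₁ ^ 2 + A) ^ 2 := by
          have := semaev3_diag A B Z₁ Z₃ Y₁ hY₁
          rw [hf] at this
          linear_combination this
        have hL : W.slope Z₁ Z₁ Y₁ Y₁ = (3 * Z₁ ^ 2 + A) / (2 * Y₁) := by
          have hLden : Y₁ - W.negY Z₁ Y₁ ≠ 0 := sub_ne_zero.mpr hy
          rw [hnegY] at hLden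
          rw [slope_of_Y_ne rfl hy, hnegY, ha₁, ha₂, ha₄,
            div_eq_div_iff hLden (mul_ne_zero h2 hY₁0)]
          ring
        have hZ₃ : Z₃ = W.addX Z₁ Z₁ (W.slope Z₁ Z₁ Y₁ Y₁) := by
          rw [haddX, hL, div_pow]
          rw [eq_sub_iff_add_eq, eq_sub_iff_add_eq, eq_div_iff
            (pow_ne_zero 2 (mul_ne_zero h2 hY₁0))]
          linear_combination hD2
        subst hZ₃
        refine ⟨Y₁, Y₁, W.negAddY Z₁ Z₁ Y₁ (W.slope Z₁ Z₁ Y₁ Y₁), h₁, h₁,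
          nonsingular_negAdd h₁ h₁ fun h => hy h.2, hY₁, hY₁,
          hEQ _ _ (nonsingular_negAdd h₁ h₁ fun h => hy h.2), ?_⟩
        rw [Point.add_self_of_Y_ne' hy]
        exact neg_add_cancel _
    · obtain ⟨Y₁, hY₁⟩ := IsAlgClosed.exists_pow_nat_eq (Z₁ ^ 3 + A * Z₁ + B) two_pos
      obtain ⟨Y₂', hY₂'⟩ := IsAlgClosed.exists_pow_nat_eq (Z₂ ^ 3 + A * Z₂ + B) two_pos
      obtain ⟨Y₂, hY₂, hD⟩ : ∃ Y₂ : K, Y₂ ^ 2 = Z₂ ^ 3 + A * Z₂ + B ∧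
          (Z₁ - Z₂) ^ 2 * (Z₃ + Z₁ + Z₂) = (Y₁ - Y₂) ^ 2 := by
        have hkey := semaev3_factor A B Z₁ Z₂ Z₃ Y₁ Y₂' hY₁ hY₂'
        rw [hf, mul_zero] at hkey
        rcases mul_eq_zero.mp hkey.symm with h | h
        · exact ⟨Y₂', hY₂', sub_eq_zero.mp h⟩
        · refine ⟨-Y₂', by rw [neg_pow]; simpa using hY₂', ?_⟩
          have := sub_eq_zero.mp h
          rw [this]; ring
      have h₁ : W.Nonsingular Z₁ Y₁ := hNS _ _ hY₁
      have h₂ : W.Nonsingular Z₂ Y₂ := hNS _ _ hY₂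
      have hZ₃ : Z₃ = W.addX Z₁ Z₂ (W.slope Z₁ Z₂ Y₁ Y₂) := by
        rw [haddX, slope_of_X_ne hx]
        have hx' : Z₁ - Z₂ ≠ 0 := sub_ne_zero.mpr hx
        field_simp
        linear_combination hD
      subst hZ₃
      refine ⟨Y₁, Y₂, W.negAddY Z₁ Z₂ Y₁ (W.slope Z₁ Z₂ Y₁ Y₂), h₁, h₂,
        nonsingular_negAdd h₁ h₂ fun h => (hx h.1).elim, hY₁, hY₂,
        hEQ _ _ (nonsingular_negAdd h₁ h₂ fun h => (hx h.1).elim), ?_⟩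
      rw [Point.add_of_X_ne' hx]
      exact neg_add_cancel _
  · -- backward direction
    rintro ⟨Y₁, Y₂, Y₃, h₁, h₂, h₃, hY₁, hY₂, hY₃, hsum⟩
    have hPQ : Point.some _ _ h₁ + Point.some _ _ h₂ = -Point.some _ _ h₃ :=
      eq_neg_of_add_eq_zero_left hsum
    rw [Point.neg_some] at hPQ
    by_cases hx : Z₁ = Z₂
    · subst hx
      by_cases hy : Y₁ = W.negY Z₁ Y₂
      · exfalso
        rw [Point.add_of_Y_eq rfl hy, zero_add] at hsum
        exact Point.some_ne_zero h₃ hsum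
      · have hYeq : Y₁ = Y₂ := by
          have hsq : (Y₁ - Y₂) * (Y₁ + Y₂) = 0 := by
            linear_combination hY₁ - hY₂
          rcases mul_eq_zero.mp hsq with h | h
          · exact sub_eq_zero.mp h
          · exfalso; apply hy; rw [hnegY]; linear_combination h
        subst hYeq
        have hY₁0 : Y₁ ≠ 0 := by
          intro h; apply hy; rw [hnegY, h]; ring
        rw [Point.add_of_Y_ne hy] at hPQ
        injection hPQ with hx' hy'
        have hL : W.slope Z₁ Z₁ Y₁ Y₁ = (3 * Z₁ ^ 2 + A) / (2 * Y₁) := by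
          have hLden : Y₁ - W.negY Z₁ Y₁ ≠ 0 := sub_ne_zero.mpr hy
          rw [hnegY] at hLden
          rw [slope_of_Y_ne rfl hy, hnegY, ha₁, ha₂, ha₄,
            div_eq_div_iff hLden (mul_ne_zero h2 hY₁0)]
          ring
        have hD2 : 4 * Y₁ ^ 2 * (Z₃ + 2 * Z₁) = (3 * Z₁ ^ 2 + A) ^ 2 := by
          rw [← hx', haddX, hL, div_pow]
          field_simp [hY₁0]
          ring
        rw [semaev3_diag A B Z₁ Z₃ Y₁ hY₁]
        linear_combination -hD2
    · rw [Point.add_of_X_ne hx] at hPQ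
      injection hPQ with hx' hy'
      have hx0 : Z₁ - Z₂ ≠ 0 := sub_ne_zero.mpr hx
      have hD : (Z₁ - Z₂) ^ 2 * (Z₃ + Z₁ + Z₂) = (Y₁ - Y₂) ^ 2 := by
        rw [← hx', haddX, slope_of_X_ne hx]
        field_simp
        ring
      have hkey := semaev3_factor A B Z₁ Z₂ Z₃ Y₁ Y₂ hY₁ hY₂
      have h0 : (Z₁ - Z₂) ^ 2 * semaev3 A B Z₁ Z₂ Z₃ = 0 := by
        rw [hkey]
        linear_combination ((Z₁ - Z₂) ^ 2 * (Z₃ + Z₁ + Z₂) - (Y₁ + Y₂) ^ 2) * hD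
      exact (mul_eq_zero.mp h0).resolve_left (pow_ne_zero 2 hx0)
end

section
/- Let F_q be a finite field of characteristic different from 2 and 3, let E : y² = x³ + Ax + B be a smooth elliptic curve over F_q, and let P = (X, Y) be a point of the trace zero subgroup T_3 ⊂ E(F_{q^3}) with P ≠ O. Define S_1 = X + X^q + X^{q^2}, S_2 = X^{1+q} + X^{1+q^2} + X^{q+q^2}, and S_3 = X^{1+q+q^2}. Then S_2² − 4 S_1 S_3 − 4B S_1 − 2A S_2 + A² = 0. -/
open WeierstrassCurve.Affine

lemma semaev_line {K : Type*} [Field K] (a b x1 x2 x3 L M : K)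
    (c1 : (L*x1+M)^2 = x1^3 + a*x1 + b)
    (k2 : x1*x2 + x3*(x1+x2) = a - 2*L*M)
    (h3 : x3 = L^2 - x1 - x2) :
    (x1*x2+x1*x3+x2*x3)^2 - 4*(x1+x2+x3)*(x1*x2*x3) - 4*b*(x1+x2+x3)
      - 2*a*(x1*x2+x1*x3+x2*x3) + a^2 = 0 := by
  subst h3
  have k3 : M^2 - b = x1*x2*(L^2-x1-x2) := by linear_combination c1 - x1*k2
  linear_combination (x1*x2+x1*(L^2-x1-x2)+x2*(L^2-x1-x2) + (a - 2*L*M) - 2*a) * k2 + 4*L^2 * k3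

open Classical in
/-- Let `F_q` have characteristic `≠ 2, 3`, let `E : y² = x³ + Ax + B` be a
smooth elliptic curve over `F_q`, and let `P = (X, Y) ≠ O` be a point of the trace zero subgroup
`T_3 ⊆ E(F_{q³})`. With `S₁ = X + X^q + X^{q²}`, `S₂ = X^{1+q} + X^{1+q²} + X^{q+q²}` and
`S₃ = X^{1+q+q²}`, one has `S₂² − 4 S₁ S₃ − 4B S₁ − 2A S₂ + A² = 0`. -/
theorem symmetrized_semaev3_vanishes_on_traceZero
    {Fq K : Type*} [Field Fq] [Fintype Fq] [Field K] [Fintype K] [Algebra Fq K]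
    (q : ℕ) (hq : q = Fintype.card Fq)
    (hcard : Fintype.card K = q ^ 3)
    (hchar2 : ringChar Fq ≠ 2) (hchar3 : ringChar Fq ≠ 3)
    (A B : Fq) (hAB : 4 * A ^ 3 + 27 * B ^ 2 ≠ 0)
    (W : WeierstrassCurve.Affine Fq) (hW : W = ⟨0, 0, 0, A, B⟩)
    (φ : K →ₐ[Fq] K) (hφ : ∀ x : K, φ x = x ^ q)
    (X Y : K) (h : (W.baseChange K).toAffine.Nonsingular X Y)
    (P : (W⁄K).Point) (hP : P = Point.some X Y h)
    (htr : P + Point.map (W' := W) φ P + Point.map (W' := W) φ (Point.map (W' := W) φ P) = 0)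
    (S₁ S₂ S₃ : K)
    (hS₁ : S₁ = X + X ^ q + X ^ q ^ 2)
    (hS₂ : S₂ = X ^ (1 + q) + X ^ (1 + q ^ 2) + X ^ (q + q ^ 2))
    (hS₃ : S₃ = X ^ (1 + q + q ^ 2)) :
    S₂ ^ 2 - 4 * S₁ * S₃ - 4 * algebraMap Fq K B * S₁ - 2 * algebraMap Fq K A * S₂ +
      algebraMap Fq K A ^ 2 = 0 := by
  subst hP
  set A' : K := algebraMap Fq K A with hA'
  set B' : K := algebraMap Fq K B with hB'
  rw [Point.map_some, Point.map_some] at htr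
  set h₂ := (W.baseChange_nonsingular φ.injective X Y).mpr h with hh₂
  set h₃ := (W.baseChange_nonsingular φ.injective (φ X) (φ Y)).mpr h₂ with hh₃
  -- curve equations
  have hE1 : Y ^ 2 = X ^ 3 + A' * X + B' := by
    have := h.left
    rw [equation_iff] at this
    simpa [hW] using this
  have hE2 : (φ Y) ^ 2 = (φ X) ^ 3 + A' * (φ X) + B' := by
    have := h₂.left
    rw [equation_iff] at this
    simpa [hW] using this
  -- P + φP = -φ²P
  have hsum : Point.some _ _ h + Point.some _ _ h₂ = -Point.some _ _ h₃ :=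
    eq_neg_of_add_eq_zero_left htr
  rw [Point.neg_some] at hsum
  by_cases hc : X = φ X ∧ Y = (W.baseChange K).toAffine.negY (φ X) (φ Y)
  · rw [Point.add_of_Y_eq hc.1 hc.2] at hsum
    exact absurd hsum.symm (Point.some_ne_zero _)
  · have hxy : X = φ X → Y ≠ (W.baseChange K).toAffine.negY (φ X) (φ Y) :=
      fun h1 h2 => hc ⟨h1, h2⟩
    rw [Point.add_some hc] at hsum
    set L := (W.baseChange K).toAffine.slope X (φ X) Y (φ Y) with hL
    have hx3 : (W.baseChange K).toAffine.addX X (φ X) L = φ (φ X) :=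
      (Point.some.inj hsum).1
    have h3 : φ (φ X) = L ^ 2 - X - φ X := by
      rw [← hx3, WeierstrassCurve.Affine.addX]
      simp [hW]
    have key : (X * φ X + X * φ (φ X) + φ X * φ (φ X)) ^ 2
        - 4 * (X + φ X + φ (φ X)) * (X * φ X * φ (φ X))
        - 4 * B' * (X + φ X + φ (φ X))
        - 2 * A' * (X * φ X + X * φ (φ X) + φ X * φ (φ X)) + A' ^ 2 = 0 := by
      by_cases hx : X = φ X
      · -- tangent case
        have hyneg : Y ≠ (W.baseChange K).toAffine.negY (φ X) (φ Y) := hxy hx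
        have hnegY : (W.baseChange K).toAffine.negY (φ X) (φ Y) = -(φ Y) := by
          rw [WeierstrassCurve.Affine.negY]; simp [hW]
        have hy : Y ≠ -(φ Y) := by rw [← hnegY]; exact hyneg
        have hYy : Y + φ Y ≠ 0 := fun hzero => hy (eq_neg_of_add_eq_zero_left hzero)
        have hYeq : Y = φ Y := by
          have hsq : (Y - φ Y) * (Y + φ Y) = 0 := by
            linear_combination hE1 - hE2 + (X^2 + X*φ X + (φ X)^2 + A') * hx
          rcases mul_eq_zero.mp hsq with h0 | h0
          · exact sub_eq_zero.mp h0
          · exact absurd h0 hYy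
        rw [← hYeq] at hYy
        have h2Y : (2 : K) * Y ≠ 0 := by rw [two_mul]; exact hYy
        have hden : Y - (W.baseChange K).toAffine.negY X Y = 2 * Y := by
          rw [WeierstrassCurve.Affine.negY]; simp [hW, two_mul]
        have hLmul : L * (2 * Y) = 3 * X ^ 2 + A' := by
          rw [hL, slope_of_Y_ne hx hyneg, hden, div_mul_cancel₀ _ h2Y]
          simp [hW, hA']
        have e2 : φ X = X := hx.symm
        simp only [e2] at h3 ⊢
        exact semaev_line A' B' X X X L (Y - L * X)
          (by linear_combination hE1)
          (by linear_combination hLmul + 2 * X * h3)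
          h3
      · -- secant case
        have hs : X - φ X ≠ 0 := sub_ne_zero.mpr hx
        have hLeq : L = (Y - φ Y) / (X - φ X) := by
          rw [hL, slope_of_X_ne hx]
        have hLmul : L * (X - φ X) = Y - φ Y := by
          rw [hLeq, div_mul_cancel₀ _ hs]
        refine semaev_line A' B' X (φ X) (φ (φ X)) L (Y - L * X)
          (by linear_combination hE1) ?_ h3
        apply mul_right_cancel₀ hs
        linear_combination hE1 - hE2 + (Y + φ Y - L * (X - φ X)) * hLmul
          + (X + φ X) * (X - φ X) * h3
    -- translate Frobenius to powers
    have hp2 : φ X = X ^ q := hφ X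
    have hp3 : φ (φ X) = X ^ q ^ 2 := by
      rw [hφ, hφ, ← pow_mul, ← pow_two]
    rw [hp3, hp2] at key
    rw [hS₁, hS₂, hS₃]
    simp only [pow_add, pow_one]
    linear_combination key
end

section
/- Let F_q be a finite field of characteristic different from 2 and 3, and let E : y² = x³ + Ax + B be a smooth elliptic curve over F_q. For a point P = (X,Y) ∈ T_3 with P ≠ O, write S_1(P) = X + X^q + X^{q^2}, S_2(P) = X^{1+q} + X^{1+q^2} + X^{q+q^2}, S_3(P) = X^{1+q+q^2}. If P, P' ∈ T_3 \ {O} satisfy S_1(P) = S_1(P') ≠ 0 and S_2(P) = S_2(P'), then S_3(P) = S_3(P'); indeed, S_3(P) = (S_2(P)² − 2A S_2(P) − 4B S_1(P) + A²) / (4 S_1(P)). -/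
open WeierstrassCurve.Affine

open Classical in
private lemma key_relation {Fq K : Type*} [Field Fq] [Field K] [Algebra Fq K]
    (A B : Fq) (W : WeierstrassCurve.Affine Fq) (hW : W = ⟨0, 0, 0, A, B⟩)
    (φ : K →ₐ[Fq] K) (X Y : K)
    (h : (W.baseChange K).toAffine.Nonsingular X Y)
    (htr : Point.some _ _ h + Point.map (W' := W) φ (Point.some _ _ h) +
      Point.map (W' := W) φ (Point.map (W' := W) φ (Point.some _ _ h)) = 0) :
    4 * (X + φ X + φ (φ X)) * (X * φ X * φ (φ X)) =
      (X * φ X + X * φ (φ X) + φ X * φ (φ X)) ^ 2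
        - 2 * algebraMap Fq K A * (X * φ X + X * φ (φ X) + φ X * φ (φ X))
        - 4 * algebraMap Fq K B * (X + φ X + φ (φ X)) + algebraMap Fq K A ^ 2 := by
  have h₁ : (W.baseChange K).toAffine.Nonsingular (φ X) (φ Y) :=
    (W.baseChange_nonsingular φ.injective X Y).mpr h
  have h₂ : (W.baseChange K).toAffine.Nonsingular (φ (φ X)) (φ (φ Y)) :=
    (W.baseChange_nonsingular φ.injective _ _).mpr h₁
  have hmap1 : Point.map (W' := W) φ (Point.some _ _ h) = Point.some _ _ h₁ := rfl
  have hmap2 : Point.map (W' := W) φ (Point.some _ _ h₁) = Point.some _ _ h₂ := rfl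
  rw [hmap1, hmap2] at htr
  have ha1 : (W.baseChange K).toAffine.a₁ = 0 := by subst hW; simp [WeierstrassCurve.map]
  have ha2 : (W.baseChange K).toAffine.a₂ = 0 := by subst hW; simp [WeierstrassCurve.map]
  have ha3 : (W.baseChange K).toAffine.a₃ = 0 := by subst hW; simp [WeierstrassCurve.map]
  have ha4 : (W.baseChange K).toAffine.a₄ = algebraMap Fq K A := by
    subst hW; simp [WeierstrassCurve.map]
  have ha6 : (W.baseChange K).toAffine.a₆ = algebraMap Fq K B := by
    subst hW; simp [WeierstrassCurve.map]
  by_cases hA : X = φ X ∧ Y = (W.baseChange K).toAffine.negY (φ X) (φ Y)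
  · rw [Point.add_of_Y_eq hA.1 hA.2, zero_add] at htr
    exact absurd htr (Point.some_ne_zero h₂)
  · have hxy : X = φ X → Y ≠ (W.baseChange K).toAffine.negY (φ X) (φ Y) :=
      fun hx hy => hA ⟨hx, hy⟩
    rw [Point.add_some hA] at htr
    have h3 := eq_neg_of_add_eq_zero_left htr
    rw [Point.neg_some] at h3
    have hx := (Point.some.inj h3).1
    have hcub := addPolynomial_slope h.left h₁.left hA
    rw [hx] at hcub
    rw [addPolynomial_eq, Cubic.prod_X_sub_C_eq, neg_inj, Cubic.toPoly_injective,
      Cubic.mk.injEq] at hcub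
    obtain ⟨-, hc2, hc1, hc0⟩ := hcub
    set L := (W.baseChange K).toAffine.slope X (φ X) Y (φ Y) with hL
    have hE1 : X + φ X + φ (φ X) = L ^ 2 := by
      linear_combination hc2 + L * ha1 - ha2
    have hE2 : X * φ X + X * φ (φ X) + φ X * φ (φ X) =
        2 * X * L ^ 2 - 2 * Y * L + algebraMap Fq K A := by
      linear_combination -hc1 + (X * L - Y) * ha1 - L * ha3 + ha4
    have hE3 : X * φ X * φ (φ X) =
        X ^ 2 * L ^ 2 - 2 * X * Y * L + Y ^ 2 - algebraMap Fq K B := by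
      linear_combination hc0 - (X * L - Y) * ha3 - ha6
    linear_combination (4 * (X * L - Y) ^ 2) * hE1 +
      (algebraMap Fq K A - (X * φ X + X * φ (φ X) + φ X * φ (φ X))
        - 2 * X * L ^ 2 + 2 * Y * L) * hE2 +
      (4 * (X + φ X + φ (φ X))) * hE3

open Classical in
/-- Let `F_q` have characteristic `≠ 2, 3` and `E : y² = x³ + Ax + B` be a
smooth elliptic curve over `F_q`. For `P = (X,Y) ∈ T_3 \ {O}` write `S₁(P) = X + X^q + X^{q²}`,
`S₂(P) = X^{1+q} + X^{1+q²} + X^{q+q²}`, `S₃(P) = X^{1+q+q²}`. If `P, P' ∈ T_3 \ {O}` satisfy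
`S₁(P) = S₁(P') ≠ 0` and `S₂(P) = S₂(P')`, then `S₃(P) = S₃(P')`; indeed
`S₃(P) = (S₂(P)² − 2A S₂(P) − 4B S₁(P) + A²) / (4 S₁(P))`. -/
theorem third_symmetric_function_determined
    {Fq K : Type*} [Field Fq] [Fintype Fq] [Field K] [Fintype K] [Algebra Fq K]
    (q : ℕ) (hq : q = Fintype.card Fq)
    (hcard : Fintype.card K = q ^ 3)
    (hchar2 : ringChar Fq ≠ 2) (hchar3 : ringChar Fq ≠ 3)
    (A B : Fq) (hAB : 4 * A ^ 3 + 27 * B ^ 2 ≠ 0)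
    (W : WeierstrassCurve.Affine Fq) (hW : W = ⟨0, 0, 0, A, B⟩)
    (φ : K →ₐ[Fq] K) (hφ : ∀ x : K, φ x = x ^ q)
    (X Y X' Y' : K)
    (h : (W.baseChange K).toAffine.Nonsingular X Y)
    (h' : (W.baseChange K).toAffine.Nonsingular X' Y')
    (P P' : (W.baseChange K).Point) (hP : P = Point.some _ _ h) (hP' : P' = Point.some _ _ h')
    (htr : P + Point.map (W' := W) φ P + Point.map (W' := W) φ (Point.map (W' := W) φ P) = 0)
    (htr' : P' + Point.map (W' := W) φ P' + Point.map (W' := W) φ (Point.map (W' := W) φ P') = 0)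
    (S₁ S₂ S₃ S₁' S₂' S₃' : K)
    (hS₁ : S₁ = X + X ^ q + X ^ q ^ 2)
    (hS₂ : S₂ = X ^ (1 + q) + X ^ (1 + q ^ 2) + X ^ (q + q ^ 2))
    (hS₃ : S₃ = X ^ (1 + q + q ^ 2))
    (hS₁' : S₁' = X' + X' ^ q + X' ^ q ^ 2)
    (hS₂' : S₂' = X' ^ (1 + q) + X' ^ (1 + q ^ 2) + X' ^ (q + q ^ 2))
    (hS₃' : S₃' = X' ^ (1 + q + q ^ 2))
    (hne : S₁ ≠ 0) (h₁₁ : S₁ = S₁') (h₂₂ : S₂ = S₂') :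
    S₃ = S₃' ∧
      S₃ = (S₂ ^ 2 - 2 * algebraMap Fq K A * S₂ - 4 * algebraMap Fq K B * S₁ +
        algebraMap Fq K A ^ 2) / (4 * S₁) := by
  subst hP hP'
  have hkey := key_relation A B W hW φ X Y h htr
  have hkey' := key_relation A B W hW φ X' Y' h' htr'
  have hx2 : φ (φ X) = X ^ q ^ 2 := by rw [hφ, hφ, ← pow_mul, ← sq]
  have hx2' : φ (φ X') = X' ^ q ^ 2 := by rw [hφ, hφ, ← pow_mul, ← sq]
  rw [hx2, hφ X, ← hS₁] at hkey
  rw [hx2', hφ X', ← hS₁'] at hkey'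
  rw [show X * X ^ q + X * X ^ q ^ 2 + X ^ q * X ^ q ^ 2
      = X ^ (1 + q) + X ^ (1 + q ^ 2) + X ^ (q + q ^ 2) by simp [pow_add],
    ← hS₂] at hkey
  rw [show X * X ^ q * X ^ q ^ 2 = X ^ (1 + q + q ^ 2) by simp [pow_add], ← hS₃] at hkey
  rw [show X' * X' ^ q + X' * X' ^ q ^ 2 + X' ^ q * X' ^ q ^ 2
      = X' ^ (1 + q) + X' ^ (1 + q ^ 2) + X' ^ (q + q ^ 2) by simp [pow_add],
    ← hS₂'] at hkey'
  rw [show X' * X' ^ q * X' ^ q ^ 2 = X' ^ (1 + q + q ^ 2) by simp [pow_add], ← hS₃'] at hkey'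
  have h2F : (2 : Fq) ≠ 0 := Ring.two_ne_zero hchar2
  have h2K : (2 : K) ≠ 0 := by
    rw [show (2 : K) = algebraMap Fq K 2 by rw [map_ofNat]]
    exact (map_ne_zero _).mpr h2F
  have h4 : (4 : K) * S₁ ≠ 0 := by
    apply mul_ne_zero _ hne
    rw [show (4 : K) = 2 * 2 by norm_num]
    exact mul_ne_zero h2K h2K
  constructor
  · apply mul_left_cancel₀ h4
    rw [← h₁₁, ← h₂₂] at hkey'
    linear_combination hkey - hkey'
  · rw [eq_div_iff h4]
    linear_combination hkey
end
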